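/- arXiv:math/0505519 — 6 statements merged into one kernel-verified Lean document; each statement's English description precedes it below -/
import Mathlib

section
/- A p-core (a partition with no cell of hook length p) never has both a removable corner and an addable corner of the same p-residue, where the p-residue of a lattice square (i,j) is (j-i) mod p. -/
/-- A partition: a weakly decreasing, finitely supported sequence of naturals
(0-indexed rows, French notation: row 0 is the bottom row). -/
structure Ptn where
  part : ℕ → ℕ
  antitone' : ∀ ⦃i j : ℕ⦄, i ≤ j → part j ≤ part i
  finite' : ∃ N, ∀ i, N ≤ i → part i = 0

namespace Ptn

/-- The diagram (set of cells) of a partition; cell `(i,j)` means row `i`, column `j`,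
both 0-indexed. -/
def cells (mu : Ptn) : Set (ℕ × ℕ) := {c | c.2 < mu.part c.1}

lemma colFinite (mu : Ptn) (j : ℕ) : {i : ℕ | j < mu.part i}.Finite := by
  obtain ⟨N, hN⟩ := mu.finite'
  apply (Set.finite_Iio N).subset
  intro i hi
  simp only [Set.mem_setOf_eq] at hi
  by_contra h
  simp only [Set.mem_Iio, not_lt] at h
  simp [hN i h] at hi

/-- Length of column `j` of `mu`, i.e. the `j`-th part of the conjugate partition. -/
noncomputable def colLen (mu : Ptn) (j : ℕ) : ℕ := Set.ncard {i : ℕ | j < mu.part i}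

/-- The conjugate partition. -/
noncomputable def conj (mu : Ptn) : Ptn where
  part := mu.colLen
  antitone' := by
    intro i j hij
    exact Set.ncard_le_ncard (fun t ht => lt_of_le_of_lt hij ht) (mu.colFinite i)
  finite' := by
    refine ⟨mu.part 0, fun j hj => ?_⟩
    unfold colLen
    convert Set.ncard_empty ℕ
    ext i
    simp only [Set.mem_setOf_eq, Set.mem_empty_iff_false, iff_false, not_lt]
    exact le_trans (mu.antitone' (Nat.zero_le i)) hj

end Ptn

namespace Ptn

/-- Hook length of the lattice square `(i,j)` (0-indexed) in `mu`. -/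
noncomputable def hook (mu : Ptn) (i j : ℕ) : ℕ :=
  (mu.part i - j) + (mu.colLen j - i) - 1

/-- Number of cells of the partition. -/
noncomputable def size (mu : Ptn) : ℕ := Set.ncard mu.cells

/-- Number of parts. -/
noncomputable def len (mu : Ptn) : ℕ := mu.colLen 0

end Ptn

/-- A `p`-core: a partition with no cell of hook length `p`. -/
def IsPCore (p : ℕ) (mu : Ptn) : Prop := ∀ i j, j < mu.part i → mu.hook i j ≠ p

/-- The `p`-residue of the lattice square `(i,j)` (0-indexed): `(j - i) mod p`. -/
def residue (p i j : ℕ) : ℤ := ((j : ℤ) - (i : ℤ)) % (p : ℤ)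

/-- A partition is `k`-bounded when all its parts are at most `k`. -/
def KBounded (k : ℕ) (mu : Ptn) : Prop := mu.part 0 ≤ k

/-- The number of cells of hook length at most `k` in row `i` of `γ`. -/
noncomputable def rowCount (k : ℕ) (γ : Ptn) (i : ℕ) : ℕ :=
  Set.ncard {j : ℕ | j < γ.part i ∧ γ.hook i j ≤ k}

/-- Dominance order: `Dominates mu lam` means `mu ⊵ lam`. -/
def Dominates (mu lam : Ptn) : Prop :=
  mu.size = lam.size ∧
  ∀ n, (∑ i ∈ Finset.range n, lam.part i) ≤ ∑ i ∈ Finset.range n, mu.part i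

/-- Containment of partitions. -/
def SubPtn (nu mu : Ptn) : Prop := ∀ i, nu.part i ≤ mu.part i

/-- `mu/nu` is a horizontal `ℓ`-strip. -/
def HStrip (mu nu : Ptn) (l : ℕ) : Prop :=
  SubPtn nu mu ∧ mu.size = nu.size + l ∧ ∀ i, mu.part (i + 1) ≤ nu.part i

/-- `mu/nu` is a vertical `ℓ`-strip. -/
def VStrip (mu nu : Ptn) (l : ℕ) : Prop :=
  SubPtn nu mu ∧ mu.size = nu.size + l ∧ ∀ i, mu.part i ≤ nu.part i + 1

/-- `(i,j)` is a removable corner of `mu` (0-indexed). -/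
def Removable (mu : Ptn) (i j : ℕ) : Prop := j + 1 = mu.part i ∧ mu.part (i + 1) ≤ j

/-- `(i,j)` is an addable corner of `mu` (0-indexed). -/
def Addable (mu : Ptn) (i j : ℕ) : Prop :=
  j = mu.part i ∧ (i = 0 ∨ mu.part i < mu.part (i - 1))

/-- The cells of the skew shape `γ/ρ`. -/
def skewCells (γ ρ : Ptn) : Set (ℕ × ℕ) := {c | ρ.part c.1 ≤ c.2 ∧ c.2 < γ.part c.1}

/-- The hook length of the lattice square `(i,j)` relative to the skew shape `γ/ρ`:
the number of cells of `γ/ρ` lying in the L with corner `(i,j)`. -/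
noncomputable def skewHook (γ ρ : Ptn) (i j : ℕ) : ℕ :=
  Set.ncard {c : ℕ × ℕ | c ∈ skewCells γ ρ ∧ ((c.1 = i ∧ j ≤ c.2) ∨ (c.2 = j ∧ i ≤ c.1))}

/-- A filling of the shape `γ` with letters `1, …, r`: rows weakly increase and
columns strictly increase. Squares outside `γ` carry the value `0`. -/
structure Filling (γ : Ptn) (r : ℕ) where
  entry : ℕ × ℕ → ℕ
  supp : ∀ c : ℕ × ℕ, entry c ≠ 0 ↔ c ∈ γ.cells
  lettersLe : ∀ c ∈ γ.cells, entry c ≤ r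
  rowsWeak : ∀ i j j', j ≤ j' → j' < γ.part i → entry (i, j) ≤ entry (i, j')
  colsStrict : ∀ i j, j < γ.part (i + 1) → entry (i, j) < entry (i + 1, j)

/-- The number of distinct `(k+1)`-residues occupied by the letter `a` in a filling. -/
noncomputable def kweight (k : ℕ) {γ : Ptn} {r : ℕ} (F : Filling γ r) (a : ℕ) : ℕ :=
  Set.ncard {m : ℤ | ∃ c ∈ γ.cells, F.entry c = a ∧ residue (k + 1) c.1 c.2 = m}

/-- The number of cells occupied by the letter `a` in a filling. -/
noncomputable def cellweight {γ : Ptn} {r : ℕ} (F : Filling γ r) (a : ℕ) : ℕ :=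
  Set.ncard {c : ℕ × ℕ | c ∈ γ.cells ∧ F.entry c = a}

/-- A `k`-tableau: a filling in which, for each letter `a ∈ {1,…,r}`, the cells
containing `a` occupy exactly `α a` distinct `(k+1)`-residues. -/
def IsKTab (k : ℕ) {γ : Ptn} {r : ℕ} (F : Filling γ r) (α : ℕ → ℕ) : Prop :=
  ∀ a, 1 ≤ a → a ≤ r → kweight k F a = α a

/-- The number of `k`-tableaux of shape `γ` with letters `1,…,r` and `k`-weight `α`. -/
noncomputable def Kcard (k : ℕ) (γ : Ptn) (r : ℕ) (α : ℕ → ℕ) : ℕ :=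
  Nat.card {F : Filling γ r // IsKTab k F α}

/-- The weight function of a partition: letter `a` gets weight `lam_a`. -/
noncomputable def wtOf (lam : Ptn) : ℕ → ℕ := fun a => lam.part (a - 1)

/-- The `k`-Kostka number `K^{(k)}_{μλ}` (given the bijection `c` from `k`-bounded
partitions to `(k+1)`-cores): the number of `k`-tableaux of shape `c μ` and `k`-weight `λ`. -/
noncomputable def KNum (k : ℕ) (c : Ptn → Ptn) (mu lam : Ptn) : ℕ :=
  Kcard k (c mu) lam.len (wtOf lam)

/-- The `k`-conjugate `λ^{ω_k} = c⁻¹((c λ)')`, expressed via `c` and its inverse `cinv`. -/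
noncomputable def wkfun (c cinv : Ptn → Ptn) (lam : Ptn) : Ptn := cinv (Ptn.conj (c lam))

/-- Hypotheses on the bijection `c` from `k`-bounded partitions to `(k+1)`-cores and
its inverse `cinv`. -/
def CorePair (k : ℕ) (c cinv : Ptn → Ptn) : Prop :=
  (∀ lam, KBounded k lam →
      IsPCore (k + 1) (c lam) ∧ ∀ i, rowCount k (c lam) i = lam.part i) ∧
  (∀ lam, KBounded k lam → cinv (c lam) = lam) ∧
  (∀ γ, IsPCore (k + 1) γ → KBounded k (cinv γ) ∧ c (cinv γ) = γ) ∧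
  (∀ γ, IsPCore (k + 1) γ → IsPCore (k + 1) (Ptn.conj γ))

/-- The ring of symmetric functions, presented as the polynomial ring
`ℤ[h₁, h₂, h₃, …]` in the (algebraically independent) complete homogeneous
symmetric functions: the variable `X n` stands for `h_{n+1}`. -/
abbrev SF := MvPolynomial ℕ ℤ

/-- The complete homogeneous symmetric function `h_n` (with `h_n = 0` for `n < 0`,
`h_0 = 1`). -/
noncomputable def hh (n : ℤ) : SF :=
  if n < 0 then 0 else if n = 0 then 1 else MvPolynomial.X (n.toNat - 1)

/-- `h_λ = h_{λ_1} h_{λ_2} ⋯`. -/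
noncomputable def hprod (lam : Ptn) : SF := ∏ᶠ i : ℕ, hh (lam.part i)

/-- The Schur function `s_λ`, via the Jacobi–Trudi determinant
`s_λ = det(h_{λ_i - i + j})`. -/
noncomputable def schur (lam : Ptn) : SF :=
  Matrix.det (Matrix.of fun i j : Fin lam.len => hh ((lam.part i : ℤ) - (i : ℤ) + (j : ℤ)))

/-- The subring `Λ^{(k)} = ℤ[h_1, …, h_k]`. -/
noncomputable def Lk (k : ℕ) : Subalgebra ℤ SF :=
  Algebra.adjoin ℤ (Set.range fun i : Fin k => (MvPolynomial.X (i : ℕ) : SF))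

/-- `s` is the family of `k`-Schur functions: it satisfies the unitriangular system
`h_λ = s_λ^{(k)} + Σ_{μ ⊳ λ} K^{(k)}_{μλ} s_μ^{(k)}` over `k`-bounded partitions. -/
def KSchurFam (k : ℕ) (c : Ptn → Ptn) (s : Ptn → SF) : Prop :=
  ∀ lam, KBounded k lam →
    hprod lam = s lam +
      ∑ᶠ mu ∈ {mu : Ptn | KBounded k mu ∧ Dominates mu lam ∧ mu ≠ lam},
        (KNum k c mu lam) • s mu

/-- The column partition `(1^l)`. -/
def colPtn (l : ℕ) : Ptn where
  part := fun i => if i < l then 1 else 0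
  antitone' := by
    intro i j hij
    by_cases h : j < l
    · simp [h, Nat.lt_of_le_of_lt hij h]
    · simp [h]
  finite' := ⟨l, fun i hi => by simp [Nat.not_lt.mpr hi]⟩

/-- The elementary symmetric function `e_l = s_{(1^l)}`. -/
noncomputable def ee (l : ℕ) : SF := schur (colPtn l)

/-- Pointwise sum of partitions. -/
def addPtn (mu nu : Ptn) : Ptn where
  part := fun i => mu.part i + nu.part i
  antitone' := fun i j hij => Nat.add_le_add (mu.antitone' hij) (nu.antitone' hij)
  finite' := by
    obtain ⟨N, hN⟩ := mu.finite'
    obtain ⟨M, hM⟩ := nu.finite'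
    exact ⟨N + M, fun i hi => by
      show mu.part i + nu.part i = 0
      rw [hN i (le_trans (Nat.le_add_right N M) hi), hM i (le_trans (Nat.le_add_left M N) hi)]⟩

/-- `μ ∪ ν`: the weakly decreasing rearrangement of the concatenation of the parts
of `μ` and `ν` (obtained as the conjugate of the sum of the conjugates). -/
noncomputable def unionPtn (mu nu : Ptn) : Ptn := Ptn.conj (addPtn (Ptn.conj mu) (Ptn.conj nu))

/-- The `k`-rectangle `(l^{k-l+1})`. -/
def rectPtn (k l : ℕ) : Ptn where
  part := fun i => if i < k - l + 1 then l else 0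
  antitone' := by
    intro i j hij
    by_cases h : j < k - l + 1
    · simp [h, Nat.lt_of_le_of_lt hij h]
    · simp [h]
  finite' := ⟨k - l + 1, fun i hi => by simp [Nat.not_lt.mpr hi]⟩

namespace Stmt0Aux

/-- Beta number of row `r`: `part r - r` as an integer. -/
noncomputable def beta (mu : Ptn) (r : ℕ) : ℤ := (mu.part r : ℤ) - r

/-- `b` is a beta number of `mu`. -/
def inB (mu : Ptn) (b : ℤ) : Prop := ∃ r : ℕ, b = beta mu r

lemma colLen_le (mu : Ptn) {r j : ℕ} (h : mu.part r ≤ j) : mu.colLen j ≤ r := by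
  have hsub : {i : ℕ | j < mu.part i} ⊆ ↑(Finset.range r) := by
    intro x hx
    simp only [Set.mem_setOf_eq] at hx
    simp only [Finset.coe_range, Set.mem_Iio]
    by_contra hc
    push_neg at hc
    have := le_trans (mu.antitone' hc) h
    omega
  have := Set.ncard_le_ncard hsub (Finset.range r).finite_toSet
  rwa [Set.ncard_coe_finset, Finset.card_range] at this

lemma lt_colLen (mu : Ptn) {r j : ℕ} (h : j < mu.part r) : r < mu.colLen j := by
  have hsub : ↑(Finset.range (r + 1)) ⊆ {i : ℕ | j < mu.part i} := by
    intro x hx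
    simp only [Finset.coe_range, Set.mem_Iio] at hx
    exact lt_of_lt_of_le h (mu.antitone' (Nat.lt_succ_iff.mp hx))
  have := Set.ncard_le_ncard hsub (mu.colFinite j)
  rwa [Set.ncard_coe_finset, Finset.card_range] at this

lemma beta_anti (mu : Ptn) {r s : ℕ} (h : r ≤ s) : beta mu s ≤ beta mu r := by
  have := mu.antitone' h
  unfold beta
  omega

lemma beta_lt (mu : Ptn) {r s : ℕ} (h : r < s) : beta mu s < beta mu r := by
  have h1 : beta mu s ≤ beta mu (r + 1) := beta_anti mu h
  have h2 : mu.part (r + 1) ≤ mu.part r := mu.antitone' (Nat.le_succ r)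
  unfold beta at *
  omega

lemma inB_of_le (mu : Ptn) {b : ℤ} (h : b ≤ -(mu.colLen 0 : ℤ)) : inB mu b := by
  refine ⟨(-b).toNat, ?_⟩
  have hcast : (((-b).toNat : ℕ) : ℤ) = -b := Int.toNat_of_nonneg (by omega)
  have hcol : mu.colLen 0 ≤ (-b).toNat := by omega
  have hpart : mu.part ((-b).toNat) = 0 := by
    by_contra hc
    have := lt_colLen mu (Nat.pos_of_ne_zero hc)
    omega
  unfold beta
  rw [hpart]
  omega

lemma hook_eq (mu : Ptn) {i j : ℕ} (hj : j < mu.part i) :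
    (mu.hook i j : ℤ) = beta mu i - ((j : ℤ) - mu.colLen j) - 1 := by
  have hc : i < mu.colLen j := lt_colLen mu hj
  unfold Ptn.hook beta
  omega

lemma exists_cell_or (mu : Ptn) {i : ℕ} (hi : 0 < mu.part i) {d : ℤ}
    (hd1 : -(mu.colLen 0 : ℤ) ≤ d) (hd2 : d ≤ beta mu i - 2) :
    (∃ j, j < mu.part i ∧ (j : ℤ) - mu.colLen j = d) ∨ inB mu (d + 1) := by
  classical
  have hPtop : d < ((mu.part i : ℕ) : ℤ) - mu.colLen (mu.part i) := by
    have h1 : mu.colLen (mu.part i) ≤ i := colLen_le mu (le_refl _)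
    unfold beta at hd2
    omega
  have hex : ∃ j : ℕ, d < (j : ℤ) - mu.colLen j := ⟨mu.part i, hPtop⟩
  have hspec : d < ((Nat.find hex : ℕ) : ℤ) - mu.colLen (Nat.find hex) := Nat.find_spec hex
  have hj0top : Nat.find hex ≤ mu.part i := Nat.find_le hPtop
  have hj0pos : 0 < Nat.find hex := by
    by_contra hc
    push_neg at hc
    have h0 : Nat.find hex = 0 := by omega
    rw [h0] at hspec
    simp only [Nat.cast_zero, zero_sub] at hspec
    omega
  set j := Nat.find hex - 1 with hjdef
  have hjlt : j < Nat.find hex := by omega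
  have hmin : ¬ d < (j : ℤ) - mu.colLen j := Nat.find_min hex hjlt
  push_neg at hmin
  have hj1 : j + 1 = Nat.find hex := by omega
  have hsucc : d < ((j + 1 : ℕ) : ℤ) - mu.colLen (j + 1) := by rw [hj1]; exact hspec
  rcases eq_or_lt_of_le hmin with heq | hlt
  · exact Or.inl ⟨j, by omega, heq⟩
  · right
    have hcol1 : (mu.colLen (j + 1) : ℤ) ≤ (j : ℤ) - d := by
      push_cast at hsucc
      omega
    have hnn : (0 : ℤ) ≤ (j : ℤ) - d := le_trans (by positivity) hcol1
    set r := ((j : ℤ) - d).toNat with hrdef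
    have hrc : ((r : ℕ) : ℤ) = (j : ℤ) - d := Int.toNat_of_nonneg hnn
    have h1 : mu.part r ≤ j + 1 := by
      by_contra hc
      push_neg at hc
      have := lt_colLen mu (show j + 1 < mu.part r by omega)
      omega
    have h2 : j < mu.part r := by
      by_contra hc
      push_neg at hc
      have := colLen_le mu hc
      omega
    refine ⟨r, ?_⟩
    have hpr : mu.part r = j + 1 := by omega
    unfold beta
    rw [hpr]
    omega

lemma core_closed {p : ℕ} (hp : 0 < p) {mu : Ptn} (hcore : IsPCore p mu) {b : ℤ}
    (hb : inB mu b) : inB mu (b - p) := by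
  obtain ⟨i, rfl⟩ := hb
  rcases Nat.eq_zero_or_pos (mu.part i) with h0 | hpos
  · refine ⟨i + p, ?_⟩
    have hz : mu.part (i + p) = 0 := by
      have := mu.antitone' (Nat.le_add_right i p)
      omega
    unfold beta
    rw [h0, hz]
    push_cast
    ring
  · by_contra hnot
    have hd1 : -(mu.colLen 0 : ℤ) ≤ beta mu i - p - 1 := by
      by_contra hc
      push_neg at hc
      exact hnot (inB_of_le mu (by omega))
    have hd2 : beta mu i - p - 1 ≤ beta mu i - 2 := by omega
    rcases exists_cell_or mu hpos hd1 hd2 with ⟨jj, hjj, hcj⟩ | hB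
    · have hhook : (mu.hook i jj : ℤ) = p := by
        rw [hook_eq mu hjj]
        omega
      exact hcore i jj hjj (by exact_mod_cast hhook)
    · have heq2 : beta mu i - p - 1 + 1 = beta mu i - p := by ring
      rw [heq2] at hB
      exact hnot hB

lemma not_inB_add {p : ℕ} (hp : 0 < p) {mu : Ptn} (hcore : IsPCore p mu) {x : ℤ}
    (hx : ¬ inB mu x) : ∀ n : ℕ, ¬ inB mu (x + n * p) := by
  intro n
  induction n with
  | zero => simpa using hx
  | succ n ih =>
    intro h
    have h2 := core_closed hp hcore h
    have heq : x + ((n : ℕ) + 1 : ℤ) * p - p = x + n * p := by ring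
    apply ih
    have : x + (((n + 1 : ℕ)) : ℤ) * p - p = x + ((n : ℕ) + 1 : ℤ) * p - p := by
      push_cast; ring
    rw [this, heq] at h2
    exact h2

end Stmt0Aux


/-- A `p`-core never has both a removable corner and an addable corner
of the same `p`-residue. -/
theorem stmt0 (p : ℕ) (hp : 0 < p) (mu : Ptn) (hcore : IsPCore p mu)
    (i j i' j' : ℕ) (hrem : Removable mu i j) (hadd : Addable mu i' j') :
    residue p i j ≠ residue p i' j' := by
  intro heq
  unfold residue at heq
  have hdvd : (p : ℤ) ∣ ((j' : ℤ) - i') - ((j : ℤ) - i) := Int.ModEq.dvd heq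
  obtain ⟨m, hm⟩ := hdvd
  obtain ⟨hr1, hr2⟩ := hrem
  obtain ⟨ha1, ha2⟩ := hadd
  have hbi : Stmt0Aux.beta mu i = (j : ℤ) + 1 - i := by
    unfold Stmt0Aux.beta
    omega
  have hbi' : Stmt0Aux.beta mu i' = (j' : ℤ) - i' := by
    unfold Stmt0Aux.beta
    omega
  have hAnot : ¬ Stmt0Aux.inB mu ((j : ℤ) - i) := by
    rintro ⟨r, hr⟩
    rcases le_or_gt r i with h | h
    · have := Stmt0Aux.beta_anti mu h
      omega
    · have h1 : i + 1 ≤ r := h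
      have hba := Stmt0Aux.beta_anti mu h1
      have h2 : Stmt0Aux.beta mu (i + 1) ≤ (j : ℤ) - i - 1 := by
        unfold Stmt0Aux.beta
        omega
      omega
  have hA'not : ¬ Stmt0Aux.inB mu ((j' : ℤ) - i' + 1) := by
    rintro ⟨r, hr⟩
    rcases le_or_gt i' r with h | h
    · have := Stmt0Aux.beta_anti mu h
      omega
    · rcases ha2 with h0 | hlt
      · omega
      · have hri : r ≤ i' - 1 := by omega
        have hb1 := Stmt0Aux.beta_anti mu hri
        have h2 : (j' : ℤ) - i' + 2 ≤ Stmt0Aux.beta mu (i' - 1) := by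
          unfold Stmt0Aux.beta
          omega
        omega
  rcases le_or_gt 0 m with hm0 | hm0
  · apply Stmt0Aux.not_inB_add hp hcore hAnot m.toNat
    refine ⟨i', ?_⟩
    rw [hbi']
    have hmc : ((m.toNat : ℕ) : ℤ) = m := Int.toNat_of_nonneg hm0
    rw [hmc]
    linear_combination -hm
  · apply Stmt0Aux.not_inB_add hp hcore hA'not (-m).toNat
    refine ⟨i, ?_⟩
    rw [hbi]
    have hmc : (((-m).toNat : ℕ) : ℤ) = -m := Int.toNat_of_nonneg (by omega)
    rw [hmc]
    linear_combination hm
end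

section
/- In a p-core γ, if an extremal cell at the top of its column occurs in row r, then in every row weakly lower than r, any extremal cell of the same p-residue also lies at the top of its column. (An extremal cell of γ is a cell (i,j) ∈ γ with (i+1,j+1) ∉ γ.) -/
namespace StmtAux

/-- The "beta-number" function `s i = λ_i - i`. -/
noncomputable def sfun (mu : Ptn) (i : ℕ) : ℤ := (mu.part i : ℤ) - i

/-- The (integer-valued) hook length of the lattice square `(i,x)`. -/
noncomputable def ffun (mu : Ptn) (i x : ℕ) : ℤ :=
  (mu.part i : ℤ) - x + mu.colLen x - i - 1

lemma lt_colLen_iff (mu : Ptn) (x i : ℕ) : i < mu.colLen x ↔ x < mu.part i := by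
  classical
  have hfin := mu.colFinite x
  set F : Finset ℕ := hfin.toFinset with hF
  have hmemF : ∀ k, k ∈ F ↔ x < mu.part k := by
    intro k; simp [hF, Set.Finite.mem_toFinset]
  have hcard : mu.colLen x = F.card := by
    rw [Ptn.colLen, Set.ncard_eq_toFinset_card _ hfin]
  have hdc : ∀ k ∈ F, k < F.card := by
    intro k hk
    have hsub : Finset.range (k + 1) ⊆ F := by
      intro a ha
      simp only [Finset.mem_range] at ha
      rw [hmemF]
      exact lt_of_lt_of_le ((hmemF k).1 hk) (mu.antitone' (Nat.lt_succ_iff.mp ha))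
    have := Finset.card_le_card hsub
    simpa using this
  have hFr : F = Finset.range F.card := by
    apply Finset.eq_of_subset_of_card_le
    · intro a ha; exact Finset.mem_range.mpr (hdc a ha)
    · simp
  constructor
  · intro h
    rw [← hmemF]
    rw [hFr]
    exact Finset.mem_range.mpr (by omega)
  · intro h
    have : i ∈ F := (hmemF i).mpr h
    rw [hFr] at this
    have := Finset.mem_range.mp this
    omega

lemma sfun_anti (mu : Ptn) {k l : ℕ} (h : k ≤ l) : sfun mu l ≤ sfun mu k := by
  have := mu.antitone' h
  unfold sfun
  push_cast
  omega

lemma colLen_le_of_part_le (mu : Ptn) {i x : ℕ} (h : mu.part i ≤ x) :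
    mu.colLen x ≤ i := by
  by_contra hc
  push_neg at hc
  have := (lt_colLen_iff mu x i).mp hc
  omega

/-- The key "intermediate value" lemma along row `i`: every value `v` with
`1 ≤ v ≤ hook(i,0)` is either a hook length in row `i`, or `s i - v` is a
beta-number of `mu`. -/
lemma rowLemma (mu : Ptn) (i : ℕ) (v : ℤ) (hv1 : 1 ≤ v) (hvf : v ≤ ffun mu i 0) :
    (∃ x : ℕ, x < mu.part i ∧ ffun mu i x = v) ∨
    (∃ k : ℕ, sfun mu k = sfun mu i - v) := by
  have hftop : ffun mu i (mu.part i) ≤ -1 := by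
    have h1 : mu.colLen (mu.part i) ≤ i := colLen_le_of_part_le mu le_rfl
    unfold ffun
    push_cast
    omega
  have hPex : ∃ x, ffun mu i x ≤ v := ⟨mu.part i, by omega⟩
  classical
  obtain ⟨x, hx, hmin⟩ : ∃ x, ffun mu i x ≤ v ∧ ∀ y, y < x → v < ffun mu i y := by
    refine ⟨Nat.find hPex, Nat.find_spec hPex, ?_⟩
    intro y hy
    have := Nat.find_min hPex hy
    omega
  have hxle : x ≤ mu.part i := by
    by_contra hc
    push_neg at hc
    have := hmin (mu.part i) hc
    omega
  by_cases hxv : ffun mu i x = v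
  · left
    refine ⟨x, ?_, hxv⟩
    rcases lt_or_eq_of_le hxle with h | h
    · exact h
    · rw [h] at hxv; omega
  · -- jump case
    have hxlt : ffun mu i x < v := lt_of_le_of_ne hx hxv
    have hx0 : x ≠ 0 := by
      intro h0
      rw [h0] at hxlt
      omega
    obtain ⟨x', rfl⟩ : ∃ x', x = x' + 1 := ⟨x - 1, by omega⟩
    have hx' : v < ffun mu i x' := hmin x' (by omega)
    right
    set b : ℤ := sfun mu i with hbdef
    have hb : (mu.part i : ℤ) - i = b := rfl
    have hL : (mu.colLen (x' + 1) : ℤ) ≤ (x' + 1 : ℕ) - b + v := by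
      unfold ffun at hxlt
      push_cast at hxlt ⊢
      omega
    have hL' : ((x' + 1 : ℕ) : ℤ) - b + v < mu.colLen x' := by
      unfold ffun at hx'
      push_cast at hx' ⊢
      omega
    set kZ : ℤ := ((x' + 1 : ℕ) : ℤ) - b + v with hkZ
    have hkZ0 : 0 ≤ kZ := le_trans (by positivity) hL
    set k : ℕ := kZ.toNat with hk
    have hkcast : (k : ℤ) = kZ := Int.toNat_of_nonneg hkZ0
    have hk1 : mu.colLen (x' + 1) ≤ k := by omega
    have hk2 : k < mu.colLen x' := by omega
    have hpk1 : mu.part k ≤ x' + 1 := by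
      by_contra hc
      push_neg at hc
      have := (lt_colLen_iff mu (x' + 1) k).mpr hc
      omega
    have hpk2 : x' < mu.part k := (lt_colLen_iff mu x' k).mp hk2
    have hpk : mu.part k = x' + 1 := by omega
    refine ⟨k, ?_⟩
    unfold sfun
    rw [hpk]
    push_cast
    push_cast at hkcast
    omega

/-- Downward closure of beta-numbers under subtracting `p`, in a `p`-core. -/
lemma closure (p : ℕ) (hp : 0 < p) (γ : Ptn) (hcore : IsPCore p γ)
    (b : ℤ) (hb : ∃ i, sfun γ i = b) : ∃ k, sfun γ k = b - p := by
  obtain ⟨i, hi⟩ := hb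
  by_cases h0 : γ.part i = 0
  · refine ⟨i + p, ?_⟩
    have hz : γ.part (i + p) = 0 :=
      Nat.le_antisymm (h0 ▸ γ.antitone' (Nat.le_add_right i p)) (Nat.zero_le _)
    unfold sfun at hi ⊢
    rw [hz]
    rw [h0] at hi
    push_cast
    omega
  · by_cases hpf : (p : ℤ) ≤ ffun γ i 0
    · rcases rowLemma γ i p (by exact_mod_cast hp) hpf with ⟨x, hxlt, hfx⟩ | ⟨k, hk⟩
      · exfalso
        have hcol : i < γ.colLen x := (lt_colLen_iff γ x i).mpr hxlt
        have hhook : γ.hook i x = p := by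
          unfold Ptn.hook
          unfold ffun at hfx
          omega
        exact hcore i x hxlt hhook
      · exact ⟨k, by rw [hk, hi]⟩
    · push_neg at hpf
      have hcol0 : (b : ℤ) + γ.colLen 0 - 1 < p := by
        unfold ffun at hpf
        unfold sfun at hi
        omega
      set kZ : ℤ := (p : ℤ) - b with hkZ
      have hkZ0 : (γ.colLen 0 : ℤ) ≤ kZ := by omega
      set k : ℕ := kZ.toNat with hk
      have hkcast : (k : ℤ) = kZ := Int.toNat_of_nonneg (by omega)
      have hz : γ.part k = 0 := by
        by_contra hc
        have : k < γ.colLen 0 := (lt_colLen_iff γ 0 k).mpr (Nat.pos_of_ne_zero hc)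
        omega
      refine ⟨k, ?_⟩
      unfold sfun
      rw [hz]
      push_cast
      omega

lemma closure_iter (p : ℕ) (hp : 0 < p) (γ : Ptn) (hcore : IsPCore p γ)
    (b : ℤ) (hb : ∃ i, sfun γ i = b) :
    ∀ t : ℕ, ∃ k, sfun γ k = b - t * p := by
  intro t
  induction t with
  | zero => simpa using hb
  | succ n ih =>
      obtain ⟨k, hk⟩ := closure p hp γ hcore _ ih
      refine ⟨k, ?_⟩
      rw [hk]
      push_cast
      ring

end StmtAux

open StmtAux

/-- In a `p`-core, if an extremal cell at the top of its column occurs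
in row `r`, then in every row weakly lower than `r` any extremal cell of the same
`p`-residue also lies at the top of its column. -/
theorem stmt1 (p : ℕ) (hp : 0 < p) (γ : Ptn) (hcore : IsPCore p γ)
    (r j : ℕ) (hcell : j < γ.part r)
    (hext : γ.part (r + 1) ≤ j + 1)  -- `(r+1, j+1) ∉ γ` : the cell is extremal
    (htop : γ.part (r + 1) ≤ j)      -- `(r+1, j) ∉ γ` : it is at the top of its column
    (m j' : ℕ) (hm : m ≤ r) (hcell' : j' < γ.part m)
    (hext' : γ.part (m + 1) ≤ j' + 1) -- `(m, j')` is extremal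
    (hres : residue p m j' = residue p r j) :
    γ.part (m + 1) ≤ j' := by
  by_contra hcon
  push_neg at hcon
  have hpm : γ.part (m + 1) = j' + 1 := le_antisymm hext' hcon
  set b : ℤ := (j' : ℤ) - m with hbdef
  have hb : sfun γ (m + 1) = b := by
    unfold sfun
    rw [hpm]
    push_cast
    ring
  set c : ℤ := (j : ℤ) - r with hcdef
  -- `c` is not a beta-number of `γ`
  have hsr : c < sfun γ r := by
    unfold sfun
    omega
  have hsr1 : sfun γ (r + 1) < c := by
    unfold sfun
    push_cast
    omega
  have hcS : ∀ k, sfun γ k ≠ c := by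
    intro k
    rcases le_or_gt k r with hk | hk
    · have h1 : sfun γ r ≤ sfun γ k := sfun_anti γ hk
      omega
    · have h1 : sfun γ k ≤ sfun γ (r + 1) := sfun_anti γ hk
      omega
  -- the residue condition gives divisibility
  have hdvd : (p : ℤ) ∣ c - b := by
    have hmod : ((j' : ℤ) - m) % p = ((j : ℤ) - r) % p := hres
    have : ((j' : ℤ) - m) ≡ ((j : ℤ) - r) [ZMOD p] := by
      simpa [Int.ModEq] using hmod
    exact this.dvd
  rcases lt_trichotomy b c with hbc | hbc | hbc
  · -- `c > b` : contradicts that the gap `(s(r+1), s r)` is shorter than `p`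
    have hcp : b + p ≤ c := by
      have h1 : (p : ℤ) ≤ c - b := Int.le_of_dvd (by omega) hdvd
      omega
    obtain ⟨k, hk⟩ := closure p hp γ hcore (sfun γ r) ⟨r, rfl⟩
    have hks : sfun γ k ≤ sfun γ (r + 1) := by
      rcases le_or_gt k r with hkr | hkr
      · have := sfun_anti γ hkr
        omega
      · exact sfun_anti γ hkr
    have hbs : sfun γ (r + 1) ≤ b := hb ▸ sfun_anti γ (by omega)
    omega
  · exact hcS (m + 1) (by omega)
  · -- `c < b` : then `c = b - t*p` would be a beta-number
    obtain ⟨t, ht⟩ : (p : ℤ) ∣ b - c := by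
      have h := dvd_neg.mpr hdvd
      rwa [neg_sub] at h
    have htpos : 0 ≤ t := by
      rcases le_or_gt 0 t with h | h
      · exact h
      · exfalso
        have hpt : (p : ℤ) * t ≤ 0 :=
          mul_nonpos_of_nonneg_of_nonpos (by positivity) (le_of_lt h)
        linarith
    obtain ⟨k, hk⟩ := closure_iter p hp γ hcore b ⟨m + 1, hb⟩ t.toNat
    refine absurd hk ?_
    have hcast : (t.toNat : ℤ) = t := Int.toNat_of_nonneg (by omega)
    have : b - (t.toNat : ℤ) * p = c := by
      rw [hcast]
      linarith [ht]
    rw [this]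
    exact hcS k
end

section
/- The map sending a (k+1)-core γ to the partition λ = (λ_1, ..., λ_ℓ), where λ_i is the number of cells in row i of γ whose hook length is at most k, is a bijection from the set of (k+1)-cores onto the set of k-bounded partitions (partitions with all parts at most k). -/
namespace Stmt2Aux

/-- Number of rows strictly above row `i` whose length exceeds `j`. -/
noncomputable def M (γ : Ptn) (i j : ℕ) : ℕ := Set.ncard {t : ℕ | j < γ.part (i + 1 + t)}

lemma M_finite (γ : Ptn) (i j : ℕ) : {t : ℕ | j < γ.part (i + 1 + t)}.Finite := by
  obtain ⟨N, hN⟩ := γ.finite'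
  apply (Set.finite_Iio N).subset
  intro t ht
  simp only [Set.mem_setOf_eq] at ht
  by_contra h
  simp only [Set.mem_Iio, not_lt] at h
  rw [hN _ (by omega)] at ht; omega

lemma colLen_eq (γ : Ptn) {i j : ℕ} (hj : j < γ.part i) :
    γ.colLen j = i + 1 + M γ i j := by
  have hset : {i' : ℕ | j < γ.part i'} =
      Set.Iic i ∪ (fun t => i + 1 + t) '' {t : ℕ | j < γ.part (i + 1 + t)} := by
    ext i'
    simp only [Set.mem_union, Set.mem_Iic, Set.mem_image, Set.mem_setOf_eq]
    constructor
    · intro h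
      by_cases hle : i' ≤ i
      · exact Or.inl hle
      · refine Or.inr ⟨i' - i - 1, ?_, by omega⟩
        rwa [show i + 1 + (i' - i - 1) = i' by omega]
    · rintro (h | ⟨t, ht, rfl⟩)
      · exact lt_of_lt_of_le hj (γ.antitone' h)
      · exact ht
  rw [Ptn.colLen, hset, Set.ncard_union_eq ?disj (Set.finite_Iic i)
        ((M_finite γ i j).image _),
      Set.ncard_image_of_injective _ (fun a b h => by omega)]
  · rw [show Set.Iic i = ↑(Finset.Iic i) from (Finset.coe_Iic i).symm, Set.ncard_coe_finset]
    simp [M]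
  case disj =>
    rw [Set.disjoint_left]
    rintro x hx ⟨t, ht, rfl⟩
    simp only [Set.mem_Iic] at hx
    omega

lemma hook_eq (γ : Ptn) {i j : ℕ} (hj : j < γ.part i) :
    γ.hook i j = (γ.part i - j) + M γ i j := by
  rw [Ptn.hook, colLen_eq γ hj]; omega

lemma M_succ (γ : Ptn) {i j : ℕ} (hj : j < γ.part (i + 1)) :
    M γ i j = M γ (i + 1) j + 1 := by
  have h1 := colLen_eq γ (lt_of_lt_of_le hj (γ.antitone' (Nat.le_succ i)))
  have h2 := colLen_eq γ hj
  omega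

lemma M_zero (γ : Ptn) {i j : ℕ} (hj : γ.part (i + 1) ≤ j) : M γ i j = 0 := by
  rw [M, Set.ncard_eq_zero (M_finite γ i j)]
  ext t
  simp only [Set.mem_setOf_eq, Set.mem_empty_iff_false, iff_false, not_lt]
  exact le_trans (γ.antitone' (by omega)) hj

lemma M_anti (γ : Ptn) (i : ℕ) : ∀ ⦃a b : ℕ⦄, a ≤ b → M γ i b ≤ M γ i a :=
  fun a b h => Set.ncard_le_ncard (fun t ht => lt_of_le_of_lt h ht) (M_finite γ i a)

lemma rowCount_eq (k : ℕ) (γ : Ptn) (i : ℕ) :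
    rowCount k γ i = Set.ncard {j | j < γ.part i ∧ (γ.part i - j) + M γ i j ≤ k} := by
  rw [rowCount]; congr 1; ext j
  simp only [Set.mem_setOf_eq]
  constructor
  · rintro ⟨h1, h2⟩; exact ⟨h1, by rw [← hook_eq γ h1]; exact h2⟩
  · rintro ⟨h1, h2⟩; exact ⟨h1, by rw [hook_eq γ h1]; exact h2⟩

lemma rowCount_succ_eq (k : ℕ) (γ : Ptn) (i : ℕ) :
    rowCount k γ (i + 1) =
      Set.ncard {j | j < γ.part (i + 1) ∧ (γ.part (i + 1) - j) + M γ i j ≤ k + 1} := by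
  rw [rowCount_eq]; congr 1; ext j
  simp only [Set.mem_setOf_eq]
  constructor
  · rintro ⟨h1, h2⟩; exact ⟨h1, by have := M_succ γ h1; omega⟩
  · rintro ⟨h1, h2⟩; exact ⟨h1, by have := M_succ γ h1; omega⟩

section KLsec

variable (k g₁ : ℕ) (m : ℕ → ℕ)

/-- `NN v` = number of rows `j < g₁` with `ψ j := g₁ - j + m j ≤ v`. -/
def NN (v : ℕ) : ℕ := ((Finset.range g₁).filter (fun j => g₁ - j + m j ≤ v)).card

/-- `GG d` = row count of the row of length `g₁ + d`. -/
def GG (d : ℕ) : ℕ := d + NN g₁ m (k - d)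

/-- `DD d` : the row of length `g₁ + d` is admissible (creates no hook `k+1`). -/
def DD (d : ℕ) : Prop := ∀ j < g₁, g₁ - j + m j ≠ k + 1 - d

variable (hm : ∀ ⦃a b : ℕ⦄, a ≤ b → m b ≤ m a)

include hm in
lemma psi_strict : ∀ {j j' : ℕ}, j ≤ j' → j' < g₁ →
    g₁ - j' + m j' + (j' - j) ≤ g₁ - j + m j := by
  intro j j' h h'
  have := hm h
  omega

include hm in
lemma psi_inj : ∀ {j j' : ℕ}, j < g₁ → j' < g₁ →
    g₁ - j + m j = g₁ - j' + m j' → j = j' := by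
  intro j j' h h' he
  rcases le_total j j' with hle | hle
  · have := psi_strict g₁ m hm hle h'; omega
  · have := psi_strict g₁ m hm hle h; omega

lemma NN_mono : ∀ {v v' : ℕ}, v ≤ v' → NN g₁ m v ≤ NN g₁ m v' := by
  intro v v' h
  apply Finset.card_le_card
  intro j hj
  simp only [Finset.mem_filter] at hj ⊢
  exact ⟨hj.1, le_trans hj.2 h⟩

lemma NN_split (v : ℕ) : NN g₁ m (v + 1) =
    NN g₁ m v + ((Finset.range g₁).filter (fun j => g₁ - j + m j = v + 1)).card := by
  have hf : (Finset.range g₁).filter (fun j => g₁ - j + m j ≤ v + 1) =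
      (Finset.range g₁).filter (fun j => g₁ - j + m j ≤ v) ∪
        (Finset.range g₁).filter (fun j => g₁ - j + m j = v + 1) := by
    ext j
    simp only [Finset.mem_union, Finset.mem_filter, Finset.mem_range]
    omega
  rw [NN, NN, hf, Finset.card_union_of_disjoint]
  rw [Finset.disjoint_left]
  intro a ha ha'
  simp only [Finset.mem_filter] at ha ha'
  omega

include hm in
lemma NN_succ_eq (v : ℕ) (h : ∀ j < g₁, g₁ - j + m j ≠ v + 1) :
    NN g₁ m (v + 1) = NN g₁ m v := by
  rw [NN_split]
  have : ((Finset.range g₁).filter (fun j => g₁ - j + m j = v + 1)) = ∅ := by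
    rw [Finset.filter_eq_empty_iff]
    intro j hj
    simp only [Finset.mem_range] at hj
    exact h j hj
  rw [this]; simp

include hm in
lemma NN_succ_mem (v : ℕ) (j₀ : ℕ) (hj₀ : j₀ < g₁) (he : g₁ - j₀ + m j₀ = v + 1) :
    NN g₁ m (v + 1) = NN g₁ m v + 1 := by
  rw [NN_split]
  have : ((Finset.range g₁).filter (fun j => g₁ - j + m j = v + 1)) = {j₀} := by
    ext j
    simp only [Finset.mem_filter, Finset.mem_range, Finset.mem_singleton]
    constructor
    · rintro ⟨h1, h2⟩
      exact psi_inj g₁ m hm h1 hj₀ (by omega)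
    · rintro rfl; exact ⟨hj₀, he⟩
  rw [this]; simp

include hm in
lemma NN_le_succ (v : ℕ) : NN g₁ m (v + 1) ≤ NN g₁ m v + 1 := by
  by_cases h : ∃ j < g₁, g₁ - j + m j = v + 1
  · obtain ⟨j₀, h1, h2⟩ := h
    rw [NN_succ_mem g₁ m hm v j₀ h1 h2]
  · push_neg at h
    rw [NN_succ_eq g₁ m hm v h]
    omega

include hm in
lemma NN_add_le (v : ℕ) : ∀ s, NN g₁ m (v + s) ≤ NN g₁ m v + s := by
  intro s
  induction s with
  | zero => simp
  | succ s ih =>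
      have := NN_le_succ g₁ m hm (v + s)
      rw [show v + (s + 1) = v + s + 1 by omega]
      omega

lemma NN_zero : NN g₁ m 0 = 0 := by
  rw [NN]
  convert Finset.card_empty
  rw [Finset.filter_eq_empty_iff]
  intro j hj
  simp only [Finset.mem_range] at hj
  omega

lemma GG_k : GG k g₁ m k = k := by
  rw [GG, Nat.sub_self, NN_zero]
  omega

include hm in
lemma GG_succ_pos (d : ℕ) (hd : d < k) (hD : DD k g₁ m (d + 1)) :
    GG k g₁ m (d + 1) = GG k g₁ m d + 1 := by
  have h1 : NN g₁ m (k - d) = NN g₁ m (k - d - 1) := by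
    rw [show k - d = (k - d - 1) + 1 by omega]
    exact NN_succ_eq g₁ m hm _ (fun j hj => by have := hD j hj; omega)
  rw [GG, GG, h1]
  have : k - (d + 1) = k - d - 1 := by omega
  rw [this]
  omega

include hm in
lemma GG_succ_neg (d : ℕ) (hd : d < k) (hD : ¬ DD k g₁ m (d + 1)) :
    GG k g₁ m (d + 1) = GG k g₁ m d := by
  simp only [DD, not_forall] at hD
  obtain ⟨j₀, hj₀, he⟩ := hD
  simp only [not_not] at he
  have h1 : NN g₁ m (k - d) = NN g₁ m (k - d - 1) + 1 := by
    rw [show k - d = (k - d - 1) + 1 by omega]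
    exact NN_succ_mem g₁ m hm _ j₀ hj₀ (by omega)
  rw [GG, GG, show k - (d + 1) = k - d - 1 by omega]
  omega

include hm in
lemma GG_le_succ (d : ℕ) : GG k g₁ m d ≤ GG k g₁ m (d + 1) := by
  by_cases hd : d < k
  · by_cases hD : DD k g₁ m (d + 1)
    · rw [GG_succ_pos k g₁ m hm d hd hD]; omega
    · rw [GG_succ_neg k g₁ m hm d hd hD]
  · rw [GG, GG, show k - d = 0 by omega, show k - (d + 1) = 0 by omega]
    omega

include hm in
lemma GG_succ_le (d : ℕ) : GG k g₁ m (d + 1) ≤ GG k g₁ m d + 1 := by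
  by_cases hd : d < k
  · by_cases hD : DD k g₁ m (d + 1)
    · rw [GG_succ_pos k g₁ m hm d hd hD]
    · rw [GG_succ_neg k g₁ m hm d hd hD]; omega
  · rw [GG, GG, show k - d = 0 by omega, show k - (d + 1) = 0 by omega]
    omega

include hm in
lemma GG_mono : ∀ {d d' : ℕ}, d ≤ d' → GG k g₁ m d ≤ GG k g₁ m d' := by
  have h0 : Monotone (GG k g₁ m) := monotone_nat_of_le_succ (GG_le_succ k g₁ m hm)
  intro d d' h
  exact h0 h

include hm in
lemma GG_le_k (d : ℕ) (hd : d ≤ k) : GG k g₁ m d ≤ k := by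
  have := GG_mono k g₁ m hm hd
  rwa [GG_k] at this

include hm in
lemma t1_le_GG (d : ℕ) (hd : d ≤ k) (hD : DD k g₁ m d) :
    NN g₁ m (k + 1) ≤ GG k g₁ m d := by
  have h1 : NN g₁ m (k - d + 1) = NN g₁ m (k - d) :=
    NN_succ_eq g₁ m hm _ (fun j hj => by have := hD j hj; omega)
  have h2 : NN g₁ m (k + 1) ≤ NN g₁ m (k - d + 1) + d := by
    have := NN_add_le g₁ m hm (k - d + 1) d
    rwa [show k - d + 1 + d = k + 1 by omega] at this
  rw [GG]
  omega

include hm in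
lemma GG_exists (t : ℕ) (ht1 : NN g₁ m (k + 1) ≤ t) (htk : t ≤ k) :
    ∃ d ≤ k, DD k g₁ m d ∧ GG k g₁ m d = t := by
  have hex : ∃ d, t ≤ GG k g₁ m d := ⟨k, by rw [GG_k]; exact htk⟩
  classical
  obtain ⟨d, hd, hmin⟩ := Nat.findX hex
  match d, hd, hmin with
  | 0, hd, hmin =>
      by_cases hD : DD k g₁ m 0
      · have h1 : NN g₁ m (k + 1) = NN g₁ m k :=
          NN_succ_eq g₁ m hm _ (fun j hj => by have := hD j hj; omega)
        have h2 : GG k g₁ m 0 = NN g₁ m k := by rw [GG]; simp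
        refine ⟨0, by omega, hD, ?_⟩
        omega
      · exfalso
        simp only [DD, not_forall] at hD
        obtain ⟨j₀, hj₀, he⟩ := hD
        simp only [not_not] at he
        have h1 : NN g₁ m (k + 1) = NN g₁ m k + 1 :=
          NN_succ_mem g₁ m hm _ j₀ hj₀ (by omega)
        have h2 : GG k g₁ m 0 = NN g₁ m k := by rw [GG]; simp
        omega
  | e + 1, hd, hmin =>
      have hlt : GG k g₁ m e < t := by
        by_contra h
        exact absurd (hmin e (Nat.lt_succ_self e)) (by simp [not_lt.mpr]; omega)
      have hek : e < k := by
        by_contra h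
        have := GG_mono k g₁ m hm (show k ≤ e by omega)
        rw [GG_k] at this
        omega
      have hle := GG_succ_le k g₁ m hm e
      by_cases hD : DD k g₁ m (e + 1)
      · refine ⟨e + 1, by omega, hD, ?_⟩
        have := GG_succ_pos k g₁ m hm e hek hD
        omega
      · exfalso
        have := GG_succ_neg k g₁ m hm e hek hD
        omega

include hm in
lemma GG_strict (d d' : ℕ) (h : d < d') (hd' : d' ≤ k) (hD' : DD k g₁ m d') :
    GG k g₁ m d < GG k g₁ m d' := by
  have h1 : GG k g₁ m d ≤ GG k g₁ m (d' - 1) := GG_mono k g₁ m hm (by omega)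
  have h2 : GG k g₁ m d' = GG k g₁ m (d' - 1) + 1 := by
    have := GG_succ_pos k g₁ m hm (d' - 1) (by omega)
      (by rwa [show d' - 1 + 1 = d' by omega])
    rwa [show d' - 1 + 1 = d' by omega] at this
  omega

omit hm

lemma ncard_filter (g : ℕ) (P : ℕ → Prop) [DecidablePred P] :
    Set.ncard {j | j < g ∧ P j} = ((Finset.range g).filter P).card := by
  rw [← Set.ncard_coe_finset]
  congr 1
  ext j
  simp only [Finset.coe_filter, Finset.mem_range, Set.mem_setOf_eq]

variable (hz : ∀ j, g₁ ≤ j → m j = 0)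

include hz in
lemma F_eq (d : ℕ) (hd : d ≤ k) :
    Set.ncard {j | j < g₁ + d ∧ g₁ + d - j + m j ≤ k} = GG k g₁ m d := by
  classical
  rw [ncard_filter]
  have hsplit : Finset.range (g₁ + d) = Finset.range g₁ ∪ Finset.Ico g₁ (g₁ + d) := by
    rw [Finset.range_eq_Ico, Finset.range_eq_Ico]
    exact (Finset.Ico_union_Ico_eq_Ico (Nat.zero_le g₁) (Nat.le_add_right g₁ d)).symm
  rw [hsplit, Finset.filter_union, Finset.card_union_of_disjoint]
  · have h1 : (Finset.range g₁).filter (fun j => g₁ + d - j + m j ≤ k) =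
        (Finset.range g₁).filter (fun j => g₁ - j + m j ≤ k - d) := by
      ext j
      simp only [Finset.mem_filter, Finset.mem_range]
      omega
    have h2 : (Finset.Ico g₁ (g₁ + d)).filter (fun j => g₁ + d - j + m j ≤ k) =
        Finset.Ico g₁ (g₁ + d) := by
      apply Finset.filter_true_of_mem
      intro j hj
      simp only [Finset.mem_Ico] at hj
      rw [hz j hj.1]
      omega
    rw [h1, h2, Nat.card_Ico]
    rw [GG, NN]
    omega
  · rw [Finset.disjoint_left]
    intro a ha ha'
    simp only [Finset.mem_filter, Finset.mem_range, Finset.mem_Ico] at ha ha'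
    omega

include hz in
lemma Adm_iff (g : ℕ) :
    (g₁ ≤ g ∧ ∀ j < g, g - j + m j ≠ k + 1) ↔
      ∃ d, d ≤ k ∧ g = g₁ + d ∧ DD k g₁ m d := by
  constructor
  · rintro ⟨hle, hadm⟩
    refine ⟨g - g₁, ?_, by omega, ?_⟩
    · by_contra h
      have hj : g₁ ≤ g - (k + 1) := by omega
      have := hadm (g - (k + 1)) (by omega)
      rw [hz _ hj] at this
      omega
    · intro j hj
      have := hadm j (by omega)
      omega
  · rintro ⟨d, hd, rfl, hD⟩
    refine ⟨by omega, fun j hj => ?_⟩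
    by_cases hjg : j < g₁
    · have := hD j hjg
      omega
    · rw [hz j (by omega)]
      omega

include hm hz in
theorem KL :
    (∀ g, g₁ ≤ g → (∀ j < g, g - j + m j ≠ k + 1) →
       Set.ncard {j | j < g₁ ∧ g₁ - j + m j ≤ k + 1} ≤
         Set.ncard {j | j < g ∧ g - j + m j ≤ k} ∧
       Set.ncard {j | j < g ∧ g - j + m j ≤ k} ≤ k) ∧
    (∀ t, Set.ncard {j | j < g₁ ∧ g₁ - j + m j ≤ k + 1} ≤ t → t ≤ k →
       ∃! g, (g₁ ≤ g ∧ ∀ j < g, g - j + m j ≠ k + 1) ∧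
         Set.ncard {j | j < g ∧ g - j + m j ≤ k} = t) := by
  classical
  have ht1 : Set.ncard {j | j < g₁ ∧ g₁ - j + m j ≤ k + 1} = NN g₁ m (k + 1) := by
    rw [ncard_filter]; rfl
  constructor
  · intro g hle hadm
    obtain ⟨d, hd, rfl, hD⟩ := (Adm_iff k g₁ m hz g).mp ⟨hle, hadm⟩
    rw [F_eq k g₁ m hz d hd, ht1]
    exact ⟨t1_le_GG k g₁ m hm d hd hD, GG_le_k k g₁ m hm d hd⟩
  · intro t ht1' htk
    rw [ht1] at ht1'
    obtain ⟨d, hd, hD, hGG⟩ := GG_exists k g₁ m hm t ht1' htk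
    refine ⟨g₁ + d, ⟨(Adm_iff k g₁ m hz _).mpr ⟨d, hd, rfl, hD⟩, ?_⟩, ?_⟩
    · rw [F_eq k g₁ m hz d hd, hGG]
    · rintro g ⟨hAdm, hF⟩
      obtain ⟨d', hd', rfl, hD'⟩ := (Adm_iff k g₁ m hz g).mp hAdm
      rw [F_eq k g₁ m hz d' hd'] at hF
      rcases lt_trichotomy d d' with h | h | h
      · have := GG_strict k g₁ m hm d d' h hd' hD'
        omega
      · rw [h]
      · have := GG_strict k g₁ m hm d' d h hd hD
        omega

end KLsec

lemma colLen_anti (γ : Ptn) : ∀ ⦃a b : ℕ⦄, a ≤ b → γ.colLen b ≤ γ.colLen a :=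
  fun a b h => Set.ncard_le_ncard (fun t ht => lt_of_le_of_lt h ht) (γ.colFinite a)

lemma colLen_zero (γ : Ptn) {j : ℕ} (hj : γ.part 0 ≤ j) : γ.colLen j = 0 := by
  rw [Ptn.colLen, Set.ncard_eq_zero (γ.colFinite j)]
  ext i
  simp only [Set.mem_setOf_eq, Set.mem_empty_iff_false, iff_false, not_lt]
  exact le_trans (γ.antitone' (Nat.zero_le i)) hj

/-- Monotonicity and boundedness of the row counts of a `(k+1)`-core. -/
lemma core_step (k : ℕ) (γ : Ptn) (hγ : IsPCore (k + 1) γ) (i : ℕ) :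
    rowCount k γ (i + 1) ≤ rowCount k γ i ∧ rowCount k γ i ≤ k := by
  have hKL := (KL k (γ.part (i + 1)) (M γ i) (M_anti γ i) (fun j hj => M_zero γ hj)).1
  have h := hKL (γ.part i) (γ.antitone' (Nat.le_succ i)) ?_
  · rwa [← rowCount_succ_eq k γ i, ← rowCount_eq k γ i] at h
  · intro j hj
    have h2 := hγ i j hj
    rwa [hook_eq γ hj] at h2

lemma rowCount_zero_of (k : ℕ) (γ : Ptn) {i : ℕ} (h : γ.part i = 0) :
    rowCount k γ i = 0 := by
  rw [rowCount]
  convert Set.ncard_empty ℕ using 2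
  ext j
  simp [h]

/-- Injectivity: a `(k+1)`-core is determined by its row counts. -/
lemma core_inj (k : ℕ) (γ δ : Ptn) (hγ : IsPCore (k + 1) γ) (hδ : IsPCore (k + 1) δ)
    (hr : ∀ i, rowCount k γ i = rowCount k δ i) : ∀ i, γ.part i = δ.part i := by
  obtain ⟨N1, h1⟩ := γ.finite'
  obtain ⟨N2, h2⟩ := δ.finite'
  have key : ∀ d i, N1 + N2 ≤ i + d → γ.part i = δ.part i := by
    intro d
    induction d with
    | zero =>
        intro i hi
        rw [h1 i (by omega), h2 i (by omega)]
    | succ d ih =>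
        intro i hi
        have habove : ∀ t, γ.part (i + 1 + t) = δ.part (i + 1 + t) :=
          fun t => ih _ (by omega)
        have hM : ∀ j, M γ i j = M δ i j := by
          intro j
          unfold M
          congr 1
          ext t
          simp only [Set.mem_setOf_eq, habove t]
        have hg1 : γ.part (i + 1) = δ.part (i + 1) := by simpa using habove 0
        have hcs := core_step k γ hγ i
        obtain ⟨g, hgP, hun⟩ :=
          (KL k (γ.part (i + 1)) (M γ i) (M_anti γ i) (fun j hj => M_zero γ hj)).2
            (rowCount k γ i) (by rw [← rowCount_succ_eq k γ i]; exact hcs.1) hcs.2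
        have hγi : γ.part i = g := by
          apply hun
          refine ⟨⟨γ.antitone' (Nat.le_succ i), fun j hj => ?_⟩, ?_⟩
          · have h2' := hγ i j hj
            rwa [hook_eq γ hj] at h2'
          · rw [← rowCount_eq k γ i]
        have hδi : δ.part i = g := by
          apply hun
          refine ⟨⟨?_, fun j hj => ?_⟩, ?_⟩
          · rw [hg1]; exact δ.antitone' (Nat.le_succ i)
          · rw [hM j]
            have h2' := hδ i j hj
            rwa [hook_eq δ hj] at h2'
          · have hset : {j | j < δ.part i ∧ δ.part i - j + M γ i j ≤ k} =
                {j | j < δ.part i ∧ δ.part i - j + M δ i j ≤ k} := by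
              ext j; rw [Set.mem_setOf_eq, Set.mem_setOf_eq, hM j]
            rw [hset, ← rowCount_eq k δ i, hr i]
        rw [hγi, hδi]
  intro i
  exact key (N1 + N2) i (by omega)

/-- Prepend a bottom row of length `g` to a partition. -/
def cons (g : ℕ) (γ : Ptn) (hg : γ.part 0 ≤ g) : Ptn where
  part := fun i => if i = 0 then g else γ.part (i - 1)
  antitone' := by
    intro i j hij
    by_cases hi : i = 0
    · subst hi
      by_cases hj : j = 0
      · subst hj; simp
      · simp only [hj, if_neg, if_pos rfl, reduceIte]
        exact le_trans (γ.antitone' (Nat.zero_le _)) hg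
    · have hj : j ≠ 0 := by omega
      simp only [hi, hj, reduceIte]
      exact γ.antitone' (by omega)
  finite' := by
    obtain ⟨N, hN⟩ := γ.finite'
    refine ⟨N + 1, fun i hi => ?_⟩
    simp only [show i ≠ 0 by omega, reduceIte]
    exact hN (i - 1) (by omega)

lemma cons_part_zero (g : ℕ) (γ : Ptn) (hg : γ.part 0 ≤ g) : (cons g γ hg).part 0 = g := rfl

lemma cons_part_succ (g : ℕ) (γ : Ptn) (hg : γ.part 0 ≤ g) (i : ℕ) :
    (cons g γ hg).part (i + 1) = γ.part i := rfl

lemma M_cons_zero (g : ℕ) (γ : Ptn) (hg : γ.part 0 ≤ g) (j : ℕ) :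
    M (cons g γ hg) 0 j = γ.colLen j := by
  unfold M Ptn.colLen
  congr 1
  ext t
  simp only [Set.mem_setOf_eq]
  rw [show 0 + 1 + t = t + 1 by omega, cons_part_succ]

lemma M_cons_succ (g : ℕ) (γ : Ptn) (hg : γ.part 0 ≤ g) (i j : ℕ) :
    M (cons g γ hg) (i + 1) j = M γ i j := by
  unfold M
  congr 1
  ext t
  simp only [Set.mem_setOf_eq]
  rw [show i + 1 + 1 + t = (i + 1 + t) + 1 by omega, cons_part_succ]

/-- Surjectivity: every `k`-bounded partition arises as the row counts of a
`(k+1)`-core. -/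
lemma core_surj (k : ℕ) : ∀ n (lam : Ptn), KBounded k lam → lam.part n = 0 →
    ∃ γ, IsPCore (k + 1) γ ∧ ∀ i, rowCount k γ i = lam.part i := by
  intro n
  induction n with
  | zero =>
      intro lam hb h0
      refine ⟨⟨fun _ => 0, fun _ _ _ => le_refl 0, ⟨0, fun _ _ => rfl⟩⟩, ?_, ?_⟩
      · intro i j hj
        simp at hj
      · intro i
        have hl : lam.part i = 0 :=
          Nat.le_antisymm (h0 ▸ lam.antitone' (Nat.zero_le i)) (Nat.zero_le _)
        rw [hl]
        exact rowCount_zero_of k _ rfl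
  | succ n ih =>
      intro lam hb h0
      obtain ⟨N, hN⟩ := lam.finite'
      set lam' : Ptn := ⟨fun i => lam.part (i + 1), fun i j h => lam.antitone' (by omega),
        ⟨N, fun i hi => hN (i + 1) (by omega)⟩⟩ with hlam'
      have hb' : KBounded k lam' := le_trans (lam.antitone' (Nat.zero_le 1)) hb
      obtain ⟨γ, hγcore, hγrc⟩ := ih lam' hb' h0
      have hmcol := colLen_anti γ
      have hzcol : ∀ j, γ.part 0 ≤ j → γ.colLen j = 0 := fun j hj => colLen_zero γ hj
      have ht1 : Set.ncard {j | j < γ.part 0 ∧ γ.part 0 - j + γ.colLen j ≤ k + 1} =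
          rowCount k γ 0 := by
        rw [rowCount_eq]
        congr 1
        ext j
        simp only [Set.mem_setOf_eq]
        constructor
        · rintro ⟨hj, h⟩
          refine ⟨hj, ?_⟩
          rw [colLen_eq γ hj] at h
          omega
        · rintro ⟨hj, h⟩
          refine ⟨hj, ?_⟩
          rw [colLen_eq γ hj]
          omega
      obtain ⟨g, ⟨⟨hge, hadm⟩, hF⟩, -⟩ :=
        (KL k (γ.part 0) γ.colLen hmcol hzcol).2 (lam.part 0)
          (by rw [ht1, hγrc 0]; exact lam.antitone' (Nat.zero_le 1)) hb
      refine ⟨cons g γ hge, ?_, ?_⟩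
      · intro i j hj
        match i with
        | 0 =>
            rw [hook_eq _ hj, M_cons_zero, cons_part_zero]
            exact hadm j hj
        | i + 1 =>
            rw [hook_eq _ hj, M_cons_succ, cons_part_succ]
            rw [cons_part_succ] at hj
            have := hγcore i j hj
            rwa [hook_eq γ hj] at this
      · intro i
        match i with
        | 0 =>
            rw [rowCount_eq, ← hF]
            congr 1
            ext j
            simp only [Set.mem_setOf_eq, cons_part_zero, M_cons_zero]
        | i + 1 =>
            rw [rowCount_eq, show lam.part (i + 1) = lam'.part i from rfl, ← hγrc i,
              rowCount_eq]
            congr 1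
            ext j
            simp only [Set.mem_setOf_eq, cons_part_succ, M_cons_succ]

lemma ptn_ext {γ δ : Ptn} (h : ∀ i, γ.part i = δ.part i) : γ = δ := by
  cases γ with
  | mk p a f =>
    cases δ with
    | mk q b g =>
      have hpq : p = q := funext h
      subst hpq
      rfl

end Stmt2Aux

/-- the map sending a `(k+1)`-core `γ` to the sequence of counts of
cells of hook length at most `k` in each row of `γ` is a bijection from
`(k+1)`-cores onto `k`-bounded partitions. -/
theorem stmt2 (k : ℕ) :
    ∃ f : {γ : Ptn // IsPCore (k + 1) γ} → {lam : Ptn // KBounded k lam},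
      (∀ γ i, ((f γ) : Ptn).part i = rowCount k (γ : Ptn) i) ∧ Function.Bijective f := by
  classical
  have hanti : ∀ (γ : Ptn), IsPCore (k + 1) γ → ∀ ⦃i j : ℕ⦄, i ≤ j →
      rowCount k γ j ≤ rowCount k γ i := by
    intro γ hγ
    have h0 : Antitone (fun i => rowCount k γ i) :=
      antitone_nat_of_succ_le (fun i => (Stmt2Aux.core_step k γ hγ i).1)
    exact fun i j h => h0 h
  have hfin : ∀ (γ : Ptn), ∃ N, ∀ i, N ≤ i → rowCount k γ i = 0 := by
    intro γ
    obtain ⟨N, hN⟩ := γ.finite'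
    exact ⟨N, fun i hi => Stmt2Aux.rowCount_zero_of k γ (hN i hi)⟩
  refine ⟨fun γp => ⟨⟨fun i => rowCount k γp.1 i, hanti γp.1 γp.2, hfin γp.1⟩,
      (Stmt2Aux.core_step k γp.1 γp.2 0).2⟩, fun γp i => rfl, ?_, ?_⟩
  · rintro ⟨γ, hγ⟩ ⟨δ, hδ⟩ he
    have hr : ∀ i, rowCount k γ i = rowCount k δ i := by
      intro i
      have h2 := congrArg (fun x : {lam : Ptn // KBounded k lam} => (x : Ptn).part i) he
      simpa using h2
    exact Subtype.ext (Stmt2Aux.ptn_ext (Stmt2Aux.core_inj k γ δ hγ hδ hr))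
  · rintro ⟨lam, hb⟩
    obtain ⟨N, hN⟩ := lam.finite'
    obtain ⟨γ, hγ, hrc⟩ := Stmt2Aux.core_surj k N lam hb (hN N le_rfl)
    exact ⟨⟨γ, hγ⟩, Subtype.ext (Stmt2Aux.ptn_ext hrc)⟩
end

section
/- For a k-bounded partition λ, the k-skew diagram λ/^k obtained by the row-insertion algorithm (successively attaching a row of length λ_i below the previous rows in the leftmost position creating no hook length exceeding k) is well defined: row i has length λ_i, no cell of λ/^k has hook length exceeding k, and every square below λ/^k has hook length exceeding k. -/
namespace Stmt6Aux

def dd (k : ℕ) (f : ℕ → ℕ) (i : ℕ) : ℕ := i + (k - f i) + 1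

def rhoF (k N : ℕ) (f : ℕ → ℕ) (i : ℕ) : ℕ :=
  if _h : N ≤ i then 0
  else max (rhoF k N f (i + 1)) (rhoF k N f (dd k f i) + f (dd k f i))
termination_by N - i
decreasing_by
  all_goals (try simp only [dd])
  all_goals omega

lemma rho_zero (k N : ℕ) (f : ℕ → ℕ) {i : ℕ} (h : N ≤ i) : rhoF k N f i = 0 := by
  rw [rhoF]; simp [h]

lemma rho_eq (k N : ℕ) (f : ℕ → ℕ) (hN : ∀ i, N ≤ i → f i = 0) (i : ℕ) :
    rhoF k N f i = max (rhoF k N f (i + 1)) (rhoF k N f (dd k f i) + f (dd k f i)) := by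
  by_cases h : N ≤ i
  · have h1 : N ≤ i + 1 := by omega
    have h2 : N ≤ dd k f i := by unfold dd; omega
    rw [rho_zero k N f h, rho_zero k N f h1, rho_zero k N f h2, hN _ h2]
    simp
  · rw [rhoF]; simp [h]

lemma legFinite (γP ρP : Ptn) (i j : ℕ) :
    {i' : ℕ | i < i' ∧ ρP.part i' ≤ j ∧ j < γP.part i'}.Finite := by
  obtain ⟨M, hM⟩ := γP.finite'
  apply (Set.finite_Iio M).subset
  intro t ht
  simp only [Set.mem_setOf_eq] at ht
  simp only [Set.mem_Iio]
  by_contra h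
  push_neg at h
  rw [hM t h] at ht
  omega

lemma hook_decomp (γP ρP : Ptn) (i j : ℕ) (hj : j < γP.part i) :
    {c : ℕ × ℕ | c ∈ skewCells γP ρP ∧ ((c.1 = i ∧ j ≤ c.2) ∨ (c.2 = j ∧ i ≤ c.1))} =
      ((fun t => (i, t)) '' Set.Ico (max j (ρP.part i)) (γP.part i)) ∪
      ((fun t => (t, j)) '' {i' : ℕ | i < i' ∧ ρP.part i' ≤ j ∧ j < γP.part i'}) := by
  ext ⟨a, b⟩
  simp only [skewCells, Set.mem_setOf_eq, Set.mem_union, Set.mem_image, Set.mem_Ico,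
    Prod.mk.injEq]
  constructor
  · rintro ⟨⟨h1, h2⟩, (⟨rfl, h4⟩ | ⟨rfl, h4⟩)⟩
    · exact Or.inl ⟨b, ⟨max_le h4 h1, h2⟩, rfl, rfl⟩
    · rcases Nat.lt_or_ge i a with h5 | h5
      · exact Or.inr ⟨a, ⟨h5, h1, h2⟩, rfl, rfl⟩
      · have : a = i := by omega
        subst this
        exact Or.inl ⟨b, ⟨max_le le_rfl h1, h2⟩, rfl, rfl⟩
  · rintro (⟨t, ⟨h1, h2⟩, rfl, rfl⟩ | ⟨t, ⟨h1, h2, h3⟩, rfl, rfl⟩)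
    · exact ⟨⟨le_trans (le_max_right _ _) h1, h2⟩, Or.inl ⟨rfl, le_trans (le_max_left _ _) h1⟩⟩
    · exact ⟨⟨h2, h3⟩, Or.inr ⟨rfl, le_of_lt h1⟩⟩

lemma hook_card (γP ρP : Ptn) (i j : ℕ) (hj : j < γP.part i) :
    skewHook γP ρP i j =
      (γP.part i - max j (ρP.part i)) +
        Set.ncard {i' : ℕ | i < i' ∧ ρP.part i' ≤ j ∧ j < γP.part i'} := by
  rw [skewHook, hook_decomp γP ρP i j hj, Set.ncard_union_eq ?disj ?f1 ?f2]
  case disj =>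
    rw [Set.disjoint_left]
    rintro c ⟨t, _ht, rfl⟩ ⟨u, hu, hc⟩
    obtain ⟨hu1, -, -⟩ := hu
    injection hc with hc1 hc2
    omega
  case f1 => exact (Set.finite_Ico _ _).image _
  case f2 => exact (legFinite γP ρP i j).image _
  congr 1
  · rw [Set.ncard_image_of_injective _ (fun a b h => by simpa using h), ← Finset.coe_Ico,
      Set.ncard_coe_finset, Nat.card_Ico]
  · exact Set.ncard_image_of_injective _ (fun a b h => by simpa using h)

end Stmt6Aux

/-- for a `k`-bounded partition `λ` the `k`-skew diagram `λ/^k` is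
well defined: there is a skew shape `γ/ρ` whose `i`-th row has length `λ_i`, none
of whose cells has hook length exceeding `k`, and all of whose squares below it
have hook length exceeding `k`. -/
theorem stmt6 (k : ℕ) (lam : Ptn) (hlam : KBounded k lam) :
    ∃ γ ρ : Ptn, SubPtn ρ γ ∧
      (∀ i, γ.part i = ρ.part i + lam.part i) ∧
      (∀ i j, (i, j) ∈ skewCells γ ρ → skewHook γ ρ i j ≤ k) ∧
      (∀ i j, j < ρ.part i → k < skewHook γ ρ i j) := by
  classical
  obtain ⟨N, hN⟩ := lam.finite'
  set f := lam.part with hfdef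
  have hf : ∀ ⦃i j : ℕ⦄, i ≤ j → f j ≤ f i := lam.antitone'
  have hk : ∀ i, f i ≤ k := fun i => le_trans (hf (Nat.zero_le i)) hlam
  set ρ : ℕ → ℕ := Stmt6Aux.rhoF k N f with hrdef
  have hρ0 : ∀ i, N ≤ i → ρ i = 0 := fun i h => Stmt6Aux.rho_zero k N f h
  have heq : ∀ i, ρ i = max (ρ (i + 1)) (ρ (Stmt6Aux.dd k f i) + f (Stmt6Aux.dd k f i)) :=
    Stmt6Aux.rho_eq k N f hN
  have hstep : ∀ i, ρ (i + 1) ≤ ρ i := fun i => (heq i) ▸ le_max_left _ _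
  have hρa : Antitone ρ := antitone_nat_of_succ_le hstep
  have hlow : ∀ i, ρ (Stmt6Aux.dd k f i) + f (Stmt6Aux.dd k f i) ≤ ρ i :=
    fun i => (heq i) ▸ le_max_right _ _
  have hγa : Antitone (fun i => ρ i + f i) :=
    antitone_nat_of_succ_le fun i => Nat.add_le_add (hstep i) (hf (Nat.le_succ i))
  have hddge : ∀ i, i + 1 ≤ Stmt6Aux.dd k f i := fun i => by unfold Stmt6Aux.dd; omega
  refine ⟨⟨fun i => ρ i + f i, fun i j h => hγa h,
      ⟨N, fun i h => by simp [hρ0 i h, hN i h]⟩⟩,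
    ⟨ρ, fun i j h => hρa h, ⟨N, hρ0⟩⟩, fun i => Nat.le_add_right _ _, fun i => rfl, ?_, ?_⟩
  · -- skew cells have hook ≤ k
    intro i j hmem
    obtain ⟨h1, h2⟩ : ρ i ≤ j ∧ j < ρ i + f i := hmem
    rw [Stmt6Aux.hook_card _ _ i j h2]
    have hsub : {i' : ℕ | i < i' ∧ ρ i' ≤ j ∧ j < ρ i' + f i'} ⊆
        Set.Ico (i + 1) (Stmt6Aux.dd k f i) := by
      intro t ht
      obtain ⟨ht1, ht2, ht3⟩ := ht
      simp only [Set.mem_Ico]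
      refine ⟨ht1, ?_⟩
      by_contra hcon
      push_neg at hcon
      have : ρ t + f t ≤ ρ (Stmt6Aux.dd k f i) + f (Stmt6Aux.dd k f i) := hγa hcon
      have := hlow i
      omega
    have hcard : Set.ncard {i' : ℕ | i < i' ∧ ρ i' ≤ j ∧ j < ρ i' + f i'} ≤ k - f i := by
      refine le_trans (Set.ncard_le_ncard hsub (Set.finite_Ico _ _)) ?_
      rw [← Finset.coe_Ico, Set.ncard_coe_finset, Nat.card_Ico]
      unfold Stmt6Aux.dd
      omega
    have hmax : max j (ρ i) = j := max_eq_left h1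
    rw [hmax]
    have := hk i
    show ρ i + f i - j + Set.ncard {i' : ℕ | i < i' ∧ ρ i' ≤ j ∧ j < ρ i' + f i'} ≤ k
    omega
  · -- cells below have hook > k
    intro i j hjmem
    have hj : j < ρ i := hjmem
    have main : ∀ m i j, N ≤ i + m → j < ρ i →
        k < f i + Set.ncard {i' : ℕ | i < i' ∧ ρ i' ≤ j ∧ j < ρ i' + f i'} := by
      intro m
      induction m with
      | zero =>
        intro i j hi hjj
        rw [hρ0 i (by omega)] at hjj
        omega
      | succ m ih =>
        intro i j hi hjj
        by_cases hc : j < ρ (i + 1)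
        · have h2 := ih (i + 1) j (by omega) hc
          have hEq : {i' : ℕ | i < i' ∧ ρ i' ≤ j ∧ j < ρ i' + f i'} =
              {i' : ℕ | i + 1 < i' ∧ ρ i' ≤ j ∧ j < ρ i' + f i'} := by
            ext t
            simp only [Set.mem_setOf_eq]
            constructor
            · rintro ⟨ha, hb, hcc⟩
              refine ⟨?_, hb, hcc⟩
              rcases Nat.lt_or_ge (i + 1) t with h5 | h5
              · exact h5
              · have : t = i + 1 := by omega
                subst this
                omega
            · rintro ⟨ha, hb, hcc⟩
              exact ⟨by omega, hb, hcc⟩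
          rw [hEq]
          have := hf (show i ≤ i + 1 by omega)
          omega
        · push_neg at hc
          have hjγ : j < ρ (Stmt6Aux.dd k f i) + f (Stmt6Aux.dd k f i) := by
            by_contra hcon
            push_neg at hcon
            have : ρ i ≤ j := (heq i) ▸ max_le hc hcon
            omega
          have hsub : Set.Icc (i + 1) (Stmt6Aux.dd k f i) ⊆
              {i' : ℕ | i < i' ∧ ρ i' ≤ j ∧ j < ρ i' + f i'} := by
            intro t ht
            simp only [Set.mem_Icc] at ht
            exact ⟨by omega, le_trans (hρa ht.1) hc, lt_of_lt_of_le hjγ (hγa ht.2)⟩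
          have hfin : {i' : ℕ | i < i' ∧ ρ i' ≤ j ∧ j < ρ i' + f i'}.Finite := by
            apply (Set.finite_Iio N).subset
            intro t ht
            obtain ⟨ht1, ht2, ht3⟩ := ht
            simp only [Set.mem_Iio]
            by_contra h
            push_neg at h
            rw [hρ0 t h, hN t h] at ht3
            omega
          have hcard : k - f i + 1 ≤
              Set.ncard {i' : ℕ | i < i' ∧ ρ i' ≤ j ∧ j < ρ i' + f i'} := by
            refine le_trans ?_ (Set.ncard_le_ncard hsub hfin)
            rw [← Finset.coe_Icc, Set.ncard_coe_finset, Nat.card_Icc]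
            unfold Stmt6Aux.dd
            omega
          have := hk i
          omega
    have h2 : j < ρ i + f i := by omega
    rw [Stmt6Aux.hook_card _ _ i j h2]
    have hmax : max j (ρ i) = ρ i := max_eq_right (le_of_lt hj)
    rw [hmax]
    have hm := main N i j (by omega) hj
    show k < ρ i + f i - ρ i + Set.ncard {i' : ℕ | i < i' ∧ ρ i' ≤ j ∧ j < ρ i' + f i'}
    omega
end

section
/- If k ≥ λ_1 + ℓ(λ) - 1 for a partition λ, then every k-tableau of shape λ and k-weight μ is an ordinary semistandard tableau of weight μ, and conversely; in particular, in this case the k-Kostka number K^{(k)}_{λμ} equals the classical Kostka number K_{λμ}. -/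
section Stmt8Aux

/-- cells are bounded by the length: row index < len. -/
lemma row_lt_len (lam : Ptn) {i j : ℕ} (h : j < lam.part i) : i < lam.len := by
  have hsub : Set.Iic i ⊆ {t : ℕ | 0 < lam.part t} := by
    intro t ht
    exact lt_of_lt_of_le (Nat.lt_of_le_of_lt (Nat.zero_le j) h)
      (lam.antitone' (Set.mem_Iic.mp ht))
  have hcard : Set.ncard (Set.Iic i) ≤ lam.len :=
    Set.ncard_le_ncard hsub (lam.colFinite 0)
  have : Set.ncard (Set.Iic i) = i + 1 := by
    rw [show (Set.Iic i) = ↑(Finset.Iic i) by simp, Set.ncard_coe_finset]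
    simp
  omega

lemma col_strict_many {lam : Ptn} {r : ℕ} (F : Filling lam r) (i j d : ℕ)
    (h : j < lam.part (i + d)) : F.entry (i, j) + d ≤ F.entry (i + d, j) := by
  induction d with
  | zero => simp
  | succ d ih =>
    have h' : j < lam.part (i + d) := lt_of_lt_of_le h (lam.antitone' (by omega))
    have := F.colsStrict (i + d) j (by rw [show i + d + 1 = i + (d+1) by omega]; exact h)
    have := ih h'
    rw [show i + (d + 1) = (i + d) + 1 by omega]
    omega

lemma residue_injOn (k r : ℕ) (lam : Ptn) (hhook : lam.part 0 + lam.len ≤ k + 1)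
    (F : Filling lam r) (a : ℕ) :
    Set.InjOn (fun c : ℕ × ℕ => residue (k + 1) c.1 c.2)
      {c : ℕ × ℕ | c ∈ lam.cells ∧ F.entry c = a} := by
  rintro ⟨i, j⟩ ⟨hc, he⟩ ⟨i', j'⟩ ⟨hc', he'⟩ hres
  simp only [Ptn.cells, Set.mem_setOf_eq] at hc hc'
  -- bounds
  have hil : i < lam.len := row_lt_len lam hc
  have hil' : i' < lam.len := row_lt_len lam hc'
  have hj0 : j < lam.part 0 := lt_of_lt_of_le hc (lam.antitone' (Nat.zero_le i))
  have hj0' : j' < lam.part 0 := lt_of_lt_of_le hc' (lam.antitone' (Nat.zero_le i'))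
  -- same diagonal
  have hdiag : (j : ℤ) - i = (j' : ℤ) - i' := by
    have hmod : ((j : ℤ) - i) % ((k : ℤ) + 1) = ((j' : ℤ) - i') % ((k : ℤ) + 1) := by
      simpa [residue] using hres
    have hdvd : ((k : ℤ) + 1) ∣ (((j' : ℤ) - i') - ((j : ℤ) - i)) :=
      Int.ModEq.dvd hmod
    have habs : |(((j' : ℤ) - i') - ((j : ℤ) - i))| < (k : ℤ) + 1 := by
      rw [abs_lt]
      omega
    have := Int.eq_zero_of_abs_lt_dvd hdvd habs
    omega
  -- conclude
  rcases lt_trichotomy i i' with hlt | heq | hgt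
  · exfalso
    have hjj : j < j' := by omega
    have h1 : j < lam.part i' := lt_trans hjj hc'
    have h2 := col_strict_many F i j (i' - i) (by rwa [show i + (i' - i) = i' by omega])
    rw [show i + (i' - i) = i' by omega] at h2
    have h3 := F.rowsWeak i' j j' (le_of_lt hjj) hc'
    omega
  · have : j = j' := by omega
    simp [heq, this]
  · exfalso
    have hjj : j' < j := by omega
    have h1 : j' < lam.part i := lt_trans hjj hc
    have h2 := col_strict_many F i' j' (i - i') (by rwa [show i' + (i - i') = i by omega])
    rw [show i' + (i - i') = i by omega] at h2
    have h3 := F.rowsWeak i j' j (le_of_lt hjj) hc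
    omega

end Stmt8Aux

/-- if `k ≥ λ₁ + ℓ(λ) - 1`, then `k`-tableaux of shape `λ` are
exactly the semistandard tableaux (the number of residues occupied by each letter
equals its number of cells), and hence `K^{(k)}_{λμ}` equals the classical Kostka
number. -/
theorem stmt8 (k r : ℕ) (lam : Ptn) (hhook : lam.part 0 + lam.len ≤ k + 1) :
    (∀ F : Filling lam r, ∀ a, 1 ≤ a → a ≤ r → kweight k F a = cellweight F a) ∧
    (∀ α : ℕ → ℕ,
      Kcard k lam r α =
        Nat.card {F : Filling lam r // ∀ a, 1 ≤ a → a ≤ r → cellweight F a = α a}) := by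
  have main : ∀ F : Filling lam r, ∀ a, 1 ≤ a → a ≤ r → kweight k F a = cellweight F a := by
    intro F a _ _
    have hset : {m : ℤ | ∃ c ∈ lam.cells, F.entry c = a ∧ residue (k + 1) c.1 c.2 = m} =
        (fun c : ℕ × ℕ => residue (k + 1) c.1 c.2) ''
          {c : ℕ × ℕ | c ∈ lam.cells ∧ F.entry c = a} := by
      ext m
      simp only [Set.mem_setOf_eq, Set.mem_image]
      tauto
    rw [kweight, hset, Set.ncard_image_of_injOn (residue_injOn k r lam hhook F a)]
    rfl
  refine ⟨main, fun α => ?_⟩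
  apply Nat.card_congr
  apply Equiv.subtypeEquivRight
  intro F
  constructor
  · intro h a h1 h2; rw [← main F a h1 h2]; exact h a h1 h2
  · intro h a h1 h2; rw [main F a h1 h2]; exact h a h1 h2
end

section
/- The k-Schur functions {s_λ^{(k)}}, defined by inverting the unitriangular system h_λ = s_λ^{(k)} + Σ_{μ ⊳ λ} K^{(k)}_{μλ} s_μ^{(k)} over k-bounded partitions λ, form a basis of the ring Λ^{(k)} = ℤ[h_1, …, h_k], and each s_λ^{(k)} expands as s_λ plus an integer combination of Schur functions s_μ with μ strictly dominating λ. -/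
section Basics

open Finset

lemma Ptn.ext' {lam mu : Ptn} (h : lam.part = mu.part) : lam = mu := by
  cases lam; cases mu; simpa using h

/-- partial sums -/
def psum (lam : Ptn) (n : ℕ) : ℕ := ∑ i ∈ Finset.range n, lam.part i

lemma psum_mono (lam : Ptn) : Monotone (psum lam) := by
  intro a b hab
  exact Finset.sum_le_sum_of_subset (Finset.range_subset_range.2 hab)

lemma initseg_finset (t : Finset ℕ) (h : ∀ i j, j ∈ t → i ≤ j → i ∈ t) :
    ∀ i, i ∈ t ↔ i < t.card := by
  intro i
  constructor
  · intro hi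
    have hsub : Finset.Iic i ⊆ t := fun j hj => h j i hi (Finset.mem_Iic.1 hj)
    have := Finset.card_le_card hsub
    simpa [Nat.card_Iic] using this
  · intro hi
    by_contra hcon
    have hsub : t ⊆ Finset.range i := by
      intro j hj
      rcases lt_or_ge j i with h'|h'
      · exact Finset.mem_range.2 h'
      · exact absurd (h i j hj h') hcon
    have := Finset.card_le_card hsub
    simp [Finset.card_range] at this
    omega

lemma initseg_set (S : Set ℕ) (hf : S.Finite) (h : ∀ i j, j ∈ S → i ≤ j → i ∈ S) :
    ∀ i, i ∈ S ↔ i < S.ncard := by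
  intro i
  have h2 := initseg_finset hf.toFinset (by simpa [Set.Finite.mem_toFinset] using h) i
  rw [← Set.ncard_coe_finset hf.toFinset, Set.Finite.coe_toFinset] at h2
  simpa [Set.Finite.mem_toFinset] using h2

lemma Ptn.mem_colLen (mu : Ptn) (i j : ℕ) : j < mu.part i ↔ i < mu.colLen j := by
  have := initseg_set {i | j < mu.part i} (mu.colFinite j)
    (by intro a b hb hab; exact lt_of_lt_of_le hb (mu.antitone' hab)) i
  simpa [Ptn.colLen] using this

lemma Ptn.size_eq_psum (mu : Ptn) (N : ℕ) (h : ∀ i, N ≤ i → mu.part i = 0) :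
    mu.size = psum mu N := by
  classical
  have hc : mu.cells = ↑((Finset.range N).biUnion
      (fun i => (Finset.range (mu.part i)).map
        ⟨fun j => (i, j), by intro a b hab; simpa using hab⟩)) := by
    ext ⟨i, j⟩
    simp only [Finset.coe_biUnion, Set.mem_iUnion, Finset.mem_coe, Finset.mem_biUnion,
      Finset.mem_map, Finset.mem_range, Function.Embedding.coeFn_mk, Prod.mk.injEq,
      Ptn.cells, Set.mem_setOf_eq]
    constructor
    · intro hij
      refine ⟨i, ?_, j, hij, rfl⟩
      by_contra hi
      rw [h i (by omega)] at hij; omega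
    · rintro ⟨a, _, b, hb, hab⟩; obtain ⟨rfl, rfl⟩ := Prod.mk.inj hab; exact hb
  rw [Ptn.size, hc, Set.ncard_coe_finset, Finset.card_biUnion]
  · simp [psum]
  · intro a _ b _ hab
    simp only [Finset.disjoint_left]
    intro ⟨x, y⟩ hx hy
    simp only [Finset.mem_map, Function.Embedding.coeFn_mk, Prod.mk.injEq] at hx hy
    obtain ⟨_, _, rfl, rfl⟩ := hx
    obtain ⟨_, _, h1⟩ := hy
    exact hab (Prod.mk.inj h1).1.symm

lemma psum_le_size (mu : Ptn) (n : ℕ) : psum mu n ≤ mu.size := by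
  obtain ⟨N, hN⟩ := mu.finite'
  have h1 : mu.size = psum mu (max n N) :=
    mu.size_eq_psum _ (fun i hi => hN i (le_trans (le_max_right _ _) hi))
  rw [h1]
  exact psum_mono mu (le_max_left _ _)

lemma Ptn.part_eq_zero_of_size_le (mu : Ptn) (i : ℕ) (h : mu.size ≤ i) : mu.part i = 0 := by
  by_contra hpos
  have h1 : ∀ j, j ≤ i → 1 ≤ mu.part j := fun j hj =>
    le_trans (by omega) (mu.antitone' hj)
  have h2 : i + 1 ≤ psum mu (i+1) := by
    calc i + 1 = ∑ j ∈ Finset.range (i+1), 1 := by simp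
    _ ≤ _ := Finset.sum_le_sum (fun j hj => h1 j (by simp at hj; omega))
  have := psum_le_size mu (i+1)
  omega

lemma psum_eq_size_of_le (mu : Ptn) (n : ℕ) (h : mu.size ≤ n) : psum mu n = mu.size := by
  have := mu.size_eq_psum n (fun i hi => mu.part_eq_zero_of_size_le i (le_trans h hi))
  omega

lemma Ptn.ext_psum {lam mu : Ptn} (h : ∀ n, psum lam n = psum mu n) : lam = mu := by
  apply Ptn.ext'
  funext i
  have h1 := h i
  have h2 := h (i+1)
  simp [psum, Finset.sum_range_succ] at h1 h2
  omega

lemma Ptn.part_le_size (mu : Ptn) (i : ℕ) : mu.part i ≤ mu.size := by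
  calc mu.part i ≤ mu.part 0 := mu.antitone' (Nat.zero_le i)
  _ ≤ psum mu 1 := by simp [psum]
  _ ≤ _ := psum_le_size mu 1

end Basics

section Dom

open Finset

lemma Dominates.refl (lam : Ptn) : Dominates lam lam := ⟨rfl, fun _ => le_rfl⟩

lemma Dominates.trans {a b c : Ptn} (h1 : Dominates a b) (h2 : Dominates b c) :
    Dominates a c := ⟨h1.1.trans h2.1, fun n => le_trans (h2.2 n) (h1.2 n)⟩

lemma Dominates.antisymm {a b : Ptn} (h1 : Dominates a b) (h2 : Dominates b a) : a = b :=
  Ptn.ext_psum (fun n => le_antisymm (h2.2 n) (h1.2 n))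

lemma sizeFinite (n : ℕ) : {mu : Ptn | mu.size = n}.Finite := by
  classical
  have hinj : Set.InjOn (fun mu : Ptn => fun i : Fin (n+1) => (⟨min (mu.part i) n, by omega⟩ : Fin (n+1)))
      {mu : Ptn | mu.size = n} := by
    intro a ha b hb hab
    simp only [Set.mem_setOf_eq] at ha hb
    apply Ptn.ext'
    funext i
    rcases le_or_gt i n with h|h
    · have := congrFun hab ⟨i, by omega⟩
      simp only [Fin.mk.injEq] at this
      have ha' : a.part i ≤ n := ha ▸ a.part_le_size i
      have hb' : b.part i ≤ n := hb ▸ b.part_le_size i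
      omega
    · rw [a.part_eq_zero_of_size_le i (by omega), b.part_eq_zero_of_size_le i (by omega)]
  exact Set.Finite.of_finite_image (Set.toFinite _) hinj

lemma domFinite (lam : Ptn) : {mu : Ptn | Dominates mu lam}.Finite :=
  (sizeFinite lam.size).subset (fun mu hmu => hmu.1)

/-- measure for induction along strict dominance -/
noncomputable def gm (lam : Ptn) : ℕ :=
  ∑ i ∈ Finset.range (lam.size + 1), (lam.size - psum lam i)

lemma gm_lt {mu lam : Ptn} (h : Dominates mu lam) (hne : mu ≠ lam) : gm mu < gm lam := by
  have hsz := h.1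
  have hex : ∃ i ∈ Finset.range (lam.size + 1), psum lam i < psum mu i := by
    by_contra hc
    push_neg at hc
    apply hne
    apply Ptn.ext_psum
    intro n
    rcases le_or_gt n lam.size with h'|h'
    · exact le_antisymm (by have := hc n (by simp; omega); omega) (h.2 n)
    · rw [psum_eq_size_of_le mu n (by omega), psum_eq_size_of_le lam n (by omega), hsz]
  obtain ⟨i0, hi0, hlt⟩ := hex
  rw [gm, gm, hsz]
  apply Finset.sum_lt_sum
  · intro i _
    exact Nat.sub_le_sub_left (h.2 i) _
  · refine ⟨i0, hi0, ?_⟩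
    have h1 := psum_le_size mu i0
    rw [hsz] at h1
    omega

lemma gInd (P : Ptn → Prop)
    (h : ∀ lam, (∀ mu, Dominates mu lam → mu ≠ lam → P mu) → P lam) : ∀ lam, P lam := by
  have key : ∀ n lam, gm lam < n → P lam := by
    intro n
    induction n with
    | zero => intro lam h'; omega
    | succ n ih =>
      intro lam hlam
      apply h
      intro mu h1 h2
      exact ih mu (by have := gm_lt h1 h2; omega)
  exact fun lam => key (gm lam + 1) lam (by omega)

end Dom

section KschDef

open Finset
open scoped Classical

lemma TKset_finite (k : ℕ) (lam : Ptn) :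
    {mu : Ptn | KBounded k mu ∧ Dominates mu lam ∧ mu ≠ lam}.Finite :=
  (domFinite lam).subset (fun _ hmu => hmu.2.1)

noncomputable def TK (k : ℕ) (lam : Ptn) : Finset Ptn := (TKset_finite k lam).toFinset

lemma mem_TK {k : ℕ} {lam mu : Ptn} :
    mu ∈ TK k lam ↔ KBounded k mu ∧ Dominates mu lam ∧ mu ≠ lam :=
  Set.Finite.mem_toFinset _

lemma fam_recur {k : ℕ} {c : Ptn → Ptn} {s : Ptn → SF} (hs : KSchurFam k c s)
    {lam : Ptn} (hlam : KBounded k lam) :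
    s lam = hprod lam - ∑ mu ∈ TK k lam, (KNum k c mu lam) • s mu := by
  have h := hs lam hlam
  rw [← Set.Finite.coe_toFinset (TKset_finite k lam), finsum_mem_coe_finset] at h
  rw [h, TK]
  ring

noncomputable def kschAux (k : ℕ) (c : Ptn → Ptn) : ℕ → Ptn → SF
  | 0 => fun _ => 0
  | N+1 => fun lam => if KBounded k lam then
      hprod lam - ∑ mu ∈ TK k lam, (KNum k c mu lam) • kschAux k c N mu else 0

lemma kschAux_stab (k : ℕ) (c : Ptn → Ptn) :
    ∀ lam : Ptn, ∀ N M : ℕ, gm lam < N → gm lam < M →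
      kschAux k c N lam = kschAux k c M lam := by
  apply gInd (fun lam => ∀ N M : ℕ, gm lam < N → gm lam < M →
      kschAux k c N lam = kschAux k c M lam)
  intro lam ih N M hN hM
  obtain ⟨N', rfl⟩ : ∃ N', N = N' + 1 := ⟨N - 1, by omega⟩
  obtain ⟨M', rfl⟩ : ∃ M', M = M' + 1 := ⟨M - 1, by omega⟩
  simp only [kschAux]
  by_cases h : KBounded k lam
  · simp only [h, if_true]
    congr 1
    apply Finset.sum_congr rfl
    intro mu hmu
    rw [mem_TK] at hmu
    have hlt := gm_lt hmu.2.1 hmu.2.2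
    rw [ih mu hmu.2.1 hmu.2.2 N' M' (by omega) (by omega)]
  · simp [h]

noncomputable def ksch (k : ℕ) (c : Ptn → Ptn) (lam : Ptn) : SF :=
  kschAux k c (gm lam + 1) lam

lemma ksch_zero {k : ℕ} {c : Ptn → Ptn} {lam : Ptn} (h : ¬ KBounded k lam) :
    ksch k c lam = 0 := by
  simp [ksch, kschAux, h]

lemma ksch_eq {k : ℕ} {c : Ptn → Ptn} {lam : Ptn} (h : KBounded k lam) :
    ksch k c lam = hprod lam - ∑ mu ∈ TK k lam, (KNum k c mu lam) • ksch k c mu := by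
  rw [ksch]
  simp only [kschAux, h, if_true]
  congr 1
  apply Finset.sum_congr rfl
  intro mu hmu
  rw [mem_TK] at hmu
  have hlt := gm_lt hmu.2.1 hmu.2.2
  rw [kschAux_stab k c mu (gm lam) (gm mu + 1) (by omega) (by omega)]
  rfl

lemma ksch_fam (k : ℕ) (c : Ptn → Ptn) : KSchurFam k c (ksch k c) := by
  intro lam hlam
  rw [← Set.Finite.coe_toFinset (TKset_finite k lam), finsum_mem_coe_finset, ← TK,
    ksch_eq hlam]
  ring

lemma fam_unique {k : ℕ} {c : Ptn → Ptn} {s1 s2 : Ptn → SF}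
    (h1 : (∀ lam, ¬ KBounded k lam → s1 lam = 0) ∧ KSchurFam k c s1)
    (h2 : (∀ lam, ¬ KBounded k lam → s2 lam = 0) ∧ KSchurFam k c s2) : s1 = s2 := by
  funext lam
  induction lam using gInd with
  | _ lam ih =>
    by_cases h : KBounded k lam
    · rw [fam_recur h1.2 h, fam_recur h2.2 h]
      congr 1
      apply Finset.sum_congr rfl
      intro mu hmu
      rw [mem_TK] at hmu
      rw [ih mu hmu.2.1 hmu.2.2]
    · rw [h1.1 lam h, h2.1 lam h]

end KschDef

section Monomials

open Finset MvPolynomial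

lemma hh_zero : hh 0 = 1 := by simp [hh]

lemma hh_coe_pos (n : ℕ) (h : 0 < n) : hh n = X (n - 1) := by
  rw [hh, if_neg (by omega), if_neg (by omega)]
  simp

lemma Ptn.part_pos_iff (nu : Ptn) (i : ℕ) : 0 < nu.part i ↔ i < nu.len := by
  simpa [Ptn.len] using nu.mem_colLen i 0

lemma hprod_eq_prod (mu : Ptn) (N : ℕ) (h : ∀ i, N ≤ i → mu.part i = 0) :
    hprod mu = ∏ i ∈ Finset.range N, hh (mu.part i) := by
  apply finprod_eq_prod_of_mulSupport_subset
  intro i hi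
  simp only [Function.mem_mulSupport] at hi
  simp only [Finset.coe_range, Set.mem_Iio]
  by_contra hc
  rw [h i (by omega)] at hi
  simp [hh] at hi

lemma hprod_eq_prod_len (mu : Ptn) :
    hprod mu = ∏ i ∈ Finset.range mu.len, hh (mu.part i) := by
  apply hprod_eq_prod
  intro i hi
  have := mu.part_pos_iff i
  omega

noncomputable def expFn (lam : Ptn) : ℕ →₀ ℕ :=
  ∑ i ∈ Finset.range lam.len, Finsupp.single (lam.part i - 1) 1

lemma monprod {ι : Type*} (t : Finset ι) (f : ι → (ℕ →₀ ℕ)) :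
    ∏ i ∈ t, (monomial (f i) (1:ℤ)) = monomial (∑ i ∈ t, f i) 1 := by
  classical
  induction t using Finset.induction with
  | empty => simp
  | insert _ _ hx ih =>
    rw [Finset.prod_insert hx, Finset.sum_insert hx, ih, monomial_mul, one_mul]

lemma hprod_monomial (lam : Ptn) : hprod lam = monomial (expFn lam) 1 := by
  rw [hprod_eq_prod_len, expFn, ← monprod]
  apply Finset.prod_congr rfl
  intro i hi
  rw [Finset.mem_range, ← lam.part_pos_iff] at hi
  rw [hh_coe_pos _ hi, X]

lemma expFn_apply (lam : Ptn) (u : ℕ) :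
    expFn lam u = ((Finset.range lam.len).filter (fun i => lam.part i = u + 1)).card := by
  classical
  rw [expFn, Finsupp.finset_sum_apply, Finset.card_filter]
  apply Finset.sum_congr rfl
  intro i hi
  rw [Finset.mem_range, ← lam.part_pos_iff] at hi
  rw [Finsupp.single_apply]
  congr 1
  simp only [eq_iff_iff]
  omega

lemma filter_gt_eq_range (lam : Ptn) (j : ℕ) :
    (Finset.range lam.len).filter (fun i => j < lam.part i) = Finset.range (lam.colLen j) := by
  have hle : lam.colLen j ≤ lam.len := by
    have := (Ptn.conj lam).antitone' (Nat.zero_le j)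
    exact this
  ext i
  simp only [Finset.mem_filter, Finset.mem_range]
  rw [lam.mem_colLen]
  omega

lemma colLen_eq_sum_expFn (lam : Ptn) (B : ℕ) (hB : lam.part 0 ≤ B) (j : ℕ) :
    lam.colLen j = ∑ u ∈ Finset.Ico j B, expFn lam u := by
  classical
  have h1 : lam.colLen j = ∑ i ∈ Finset.range lam.len, (if j < lam.part i then 1 else 0) := by
    rw [← Finset.card_filter, filter_gt_eq_range, Finset.card_range]
  rw [h1]
  have h2 : ∀ i ∈ Finset.range lam.len,
      (if j < lam.part i then 1 else 0) =
        ∑ u ∈ Finset.Ico j B, (if lam.part i = u + 1 then 1 else 0) := by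
    intro i hi
    rw [Finset.mem_range, ← lam.part_pos_iff] at hi
    have hpb : lam.part i ≤ B := le_trans (lam.antitone' (Nat.zero_le i)) hB
    have h3 : ∀ u, (lam.part i = u + 1) = (u = lam.part i - 1) := by
      intro u; simp only [eq_iff_iff]; omega
    simp only [h3]
    rw [Finset.sum_ite_eq' (Finset.Ico j B) (lam.part i - 1) (fun _ => 1)]
    simp only [Finset.mem_Ico]
    split_ifs with hmem h' h' <;> omega
  rw [Finset.sum_congr rfl h2, Finset.sum_comm]
  apply Finset.sum_congr rfl
  intro u _
  rw [expFn_apply, Finset.card_filter]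

lemma expFn_injective {lam nu : Ptn} (h : expFn lam = expFn nu) : lam = nu := by
  set B := max (lam.part 0) (nu.part 0) with hB
  have hcol : ∀ j, lam.colLen j = nu.colLen j := by
    intro j
    rw [colLen_eq_sum_expFn lam B (le_max_left _ _) j,
      colLen_eq_sum_expFn nu B (le_max_right _ _) j, h]
  apply Ptn.ext'
  funext i
  have h1 : ∀ j, j < lam.part i ↔ j < nu.part i := by
    intro j
    rw [lam.mem_colLen, nu.mem_colLen, hcol]
  have := h1 (lam.part i)
  have := h1 (nu.part i)
  omega

lemma expFn_support {k : ℕ} {lam : Ptn} (h : KBounded k lam) (u : ℕ) (hu : expFn lam u ≠ 0) :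
    u < k := by
  rw [expFn_apply] at hu
  obtain ⟨i, hi⟩ := Finset.card_ne_zero.1 hu |>.exists_mem
  simp only [Finset.mem_filter, Finset.mem_range] at hi
  have := lam.antitone' (Nat.zero_le i)
  have := h
  rw [KBounded] at this
  omega

end Monomials

section Surj

open Finset MvPolynomial

lemma expFn_from_colLen (lam : Ptn) (u : ℕ) :
    expFn lam u = lam.colLen u - lam.colLen (u + 1) := by
  set B := max (lam.part 0) (u + 2) with hB
  have h1 := colLen_eq_sum_expFn lam B (le_max_left _ _) u
  have h2 := colLen_eq_sum_expFn lam B (le_max_left _ _) (u + 1)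
  have hub : u < B := by omega
  rw [Finset.sum_eq_sum_Ico_succ_bot hub _] at h1
  omega

/-- build a partition from a multiplicity vector supported in `[0,k)` -/
noncomputable def buildPtn (k : ℕ) (e : ℕ →₀ ℕ) : Ptn where
  part := fun i => ((Finset.range k).filter (fun j => i < ∑ u ∈ Finset.Ico j k, e u)).card
  antitone' := by
    intro i i' hii'
    apply Finset.card_le_card
    intro j hj
    simp only [Finset.mem_filter] at hj ⊢
    exact ⟨hj.1, by omega⟩
  finite' := by
    refine ⟨∑ u ∈ Finset.Ico 0 k, e u, fun i hi => ?_⟩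
    convert Finset.card_empty
    rw [Finset.filter_eq_empty_iff]
    intro j hj
    have : ∑ u ∈ Finset.Ico j k, e u ≤ ∑ u ∈ Finset.Ico 0 k, e u :=
      Finset.sum_le_sum_of_subset (Finset.Ico_subset_Ico (by omega) le_rfl)
    omega

lemma buildPtn_part_iff (k : ℕ) (e : ℕ →₀ ℕ) (i j : ℕ) :
    j < (buildPtn k e).part i ↔ i < ∑ u ∈ Finset.Ico j k, e u := by
  have hdc : ∀ a b, b ∈ (Finset.range k).filter
        (fun j => i < ∑ u ∈ Finset.Ico j k, e u) → a ≤ b →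
      a ∈ (Finset.range k).filter (fun j => i < ∑ u ∈ Finset.Ico j k, e u) := by
    intro a b hb hab
    simp only [Finset.mem_filter, Finset.mem_range] at hb ⊢
    refine ⟨by omega, ?_⟩
    have : ∑ u ∈ Finset.Ico b k, e u ≤ ∑ u ∈ Finset.Ico a k, e u :=
      Finset.sum_le_sum_of_subset (Finset.Ico_subset_Ico hab le_rfl)
    omega
  have hmem := initseg_finset _ hdc j
  show j < Finset.card ((Finset.range k).filter (fun j => i < ∑ u ∈ Finset.Ico j k, e u)) ↔ _
  rw [← hmem]
  simp only [Finset.mem_filter, Finset.mem_range]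
  constructor
  · exact fun h => h.2
  · intro h
    refine ⟨?_, h⟩
    by_contra hc
    rw [Finset.Ico_eq_empty (by omega)] at h
    simp at h
lemma buildPtn_colLen (k : ℕ) (e : ℕ →₀ ℕ) (j : ℕ) :
    (buildPtn k e).colLen j = ∑ u ∈ Finset.Ico j k, e u := by
  rw [Ptn.colLen]
  have : {i : ℕ | j < (buildPtn k e).part i} = Set.Iio (∑ u ∈ Finset.Ico j k, e u) := by
    ext i
    simp only [Set.mem_setOf_eq, Set.mem_Iio]
    exact buildPtn_part_iff k e i j
  rw [this, ← Finset.coe_range, Set.ncard_coe_finset, Finset.card_range]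

lemma buildPtn_kbounded (k : ℕ) (e : ℕ →₀ ℕ) : KBounded k (buildPtn k e) := by
  show Finset.card ((Finset.range k).filter (fun j => 0 < ∑ u ∈ Finset.Ico j k, e u)) ≤ k
  calc Finset.card _ ≤ (Finset.range k).card := Finset.card_le_card (Finset.filter_subset _ _)
  _ = k := Finset.card_range k

lemma buildPtn_expFn (k : ℕ) (e : ℕ →₀ ℕ) (he : ∀ u, e u ≠ 0 → u < k) :
    expFn (buildPtn k e) = e := by
  ext u
  rw [expFn_from_colLen, buildPtn_colLen, buildPtn_colLen]
  rcases lt_or_ge u k with h|h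
  · rw [Finset.sum_eq_sum_Ico_succ_bot (by omega) _]
    omega
  · rw [Finset.Ico_eq_empty (by omega), Finset.Ico_eq_empty (by omega)]
    have : e u = 0 := by by_contra hc; exact absurd (he u hc) (by omega)
    simp [this]

/-- the set of monomials with variables `< k` -/
def Mset (k : ℕ) : Set SF :=
  {p | ∃ e : ℕ →₀ ℕ, (∀ u, e u ≠ 0 → u < k) ∧ p = monomial e 1}

lemma range_hprodKB (k : ℕ) :
    Set.range (fun lam : {lam : Ptn // KBounded k lam} => hprod (lam : Ptn)) = Mset k := by
  ext p
  constructor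
  · rintro ⟨⟨lam, hlam⟩, rfl⟩
    exact ⟨expFn lam, fun u hu => expFn_support hlam u hu, hprod_monomial lam⟩
  · rintro ⟨e, he, rfl⟩
    refine ⟨⟨buildPtn k e, buildPtn_kbounded k e⟩, ?_⟩
    show hprod (buildPtn k e) = _
    rw [hprod_monomial, buildPtn_expFn k e he]

lemma mset_sub_closure (k : ℕ) :
    Mset k ⊆ ↑(Submonoid.closure (Set.range fun i : Fin k => (X (i : ℕ) : SF))) := by
  rintro p ⟨e, he, rfl⟩
  rw [monomial_eq, map_one, one_mul]
  apply Submonoid.prod_mem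
  intro u hu
  apply pow_mem
  apply Submonoid.subset_closure
  exact ⟨⟨u, he u (Finsupp.mem_support_iff.1 hu)⟩, rfl⟩

lemma closure_sub_mset (k : ℕ) :
    (Submonoid.closure (Set.range fun i : Fin k => (X (i : ℕ) : SF)) : Set SF) ⊆ Mset k := by
  intro p hp
  induction hp using Submonoid.closure_induction with
  | mem x hx =>
    obtain ⟨i, rfl⟩ := hx
    refine ⟨Finsupp.single (i : ℕ) 1, ?_, rfl⟩
    intro u hu
    rcases eq_or_ne u (i : ℕ) with rfl|h
    · exact i.2
    · simp [Finsupp.single_apply, h.symm] at hu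
  | one => exact ⟨0, by simp, by simp⟩
  | mul x y _ _ hx hy =>
    obtain ⟨e1, he1, rfl⟩ := hx
    obtain ⟨e2, he2, rfl⟩ := hy
    refine ⟨e1 + e2, ?_, by rw [monomial_mul, one_mul]⟩
    intro u hu
    simp only [Finsupp.add_apply] at hu
    rcases Nat.eq_zero_or_pos (e1 u) with h1|h1
    · exact he2 u (by omega)
    · exact he1 u (by omega)

lemma span_Mset_eq_Lk (k : ℕ) :
    Submodule.span ℤ (Mset k) = Subalgebra.toSubmodule (Lk k) := by
  rw [Lk, Algebra.adjoin_eq_span]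
  apply Submodule.span_eq_span
  · exact (mset_sub_closure k).trans Submodule.subset_span
  · exact (closure_sub_mset k).trans Submodule.subset_span

end Surj

section SpanIndep

open Finset MvPolynomial
open scoped Classical

variable {k : ℕ} {c : Ptn → Ptn} {s : Ptn → SF}

lemma TK_subset {lam mu : Ptn} (h : mu ∈ TK k lam) : TK k mu ⊆ TK k lam := by
  intro nu hnu
  rw [mem_TK] at h hnu ⊢
  refine ⟨hnu.1, hnu.2.1.trans h.2.1, ?_⟩
  rintro rfl
  exact h.2.2 (h.2.1.antisymm hnu.2.1)

lemma nat_smul_mem {M : Type*} [AddCommGroup M] [Module ℤ M] {p : Submodule ℤ M}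
    {x : M} (hx : x ∈ p) (n : ℕ) : n • x ∈ p := by
  rw [← Nat.cast_smul_eq_nsmul ℤ]
  exact p.smul_mem _ hx

/-- the k-Schur functions lie in the span of the `hprod`s -/
lemma s_mem_span_hprod (hs : KSchurFam k c s) :
    ∀ lam, KBounded k lam →
      s lam ∈ Submodule.span ℤ
        (Set.range (fun lam : {lam : Ptn // KBounded k lam} => hprod (lam : Ptn))) := by
  intro lam
  induction lam using gInd with
  | _ lam ih =>
    intro hlam
    rw [fam_recur hs hlam]
    apply Submodule.sub_mem
    · exact Submodule.subset_span (Set.mem_range_self (⟨lam, hlam⟩ : {lam : Ptn // KBounded k lam}))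
    · apply Submodule.sum_mem
      intro mu hmu
      rw [mem_TK] at hmu
      exact nat_smul_mem (ih mu hmu.2.1 hmu.2.2 hmu.1) _

lemma hprod_mem_span_s (hs : KSchurFam k c s) {lam : Ptn} (hlam : KBounded k lam) :
    hprod lam ∈ Submodule.span ℤ
      (Set.range (fun lam : {lam : Ptn // KBounded k lam} => s (lam : Ptn))) := by
  have h := fam_recur hs hlam
  have : hprod lam = s lam + ∑ mu ∈ TK k lam, (KNum k c mu lam) • s mu := by
    rw [h]; ring
  rw [this]
  apply Submodule.add_mem
  · exact Submodule.subset_span (Set.mem_range_self (⟨lam, hlam⟩ : {lam : Ptn // KBounded k lam}))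
  · apply Submodule.sum_mem
    intro mu hmu
    rw [mem_TK] at hmu
    exact nat_smul_mem (Submodule.subset_span
      (Set.mem_range_self (⟨mu, hmu.1⟩ : {lam : Ptn // KBounded k lam}))) _

lemma span_s_eq_span_hprod (hs : KSchurFam k c s) :
    Submodule.span ℤ (Set.range (fun lam : {lam : Ptn // KBounded k lam} => s (lam : Ptn))) =
    Submodule.span ℤ
      (Set.range (fun lam : {lam : Ptn // KBounded k lam} => hprod (lam : Ptn))) := by
  apply le_antisymm
  · rw [Submodule.span_le]
    rintro p ⟨⟨lam, hlam⟩, rfl⟩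
    exact s_mem_span_hprod hs lam hlam
  · rw [Submodule.span_le]
    rintro p ⟨⟨lam, hlam⟩, rfl⟩
    exact hprod_mem_span_s hs hlam

/-- extraction of coefficients from a span over a finset image -/
lemma span_extract {t : Finset Ptn} {f : Ptn → SF} {x : SF}
    (hx : x ∈ Submodule.span ℤ (f '' ↑t)) :
    ∃ d : Ptn → ℤ, x = ∑ mu ∈ t, d mu • f mu := by
  induction hx using Submodule.span_induction with
  | mem y hy =>
    obtain ⟨mu0, hmu0, rfl⟩ := hy
    refine ⟨fun mu => if mu = mu0 then 1 else 0, ?_⟩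
    have hcongr : ∀ mu ∈ t, (if mu = mu0 then (1:ℤ) else 0) • f mu =
        if mu = mu0 then f mu else 0 := by
      intro mu _; split_ifs <;> simp
    rw [Finset.sum_congr rfl hcongr, Finset.sum_ite_eq' t mu0 f,
      if_pos (by exact_mod_cast hmu0)]
  | zero => exact ⟨0, by simp⟩
  | add y z _ _ hy hz =>
    obtain ⟨d1, rfl⟩ := hy
    obtain ⟨d2, rfl⟩ := hz
    exact ⟨d1 + d2, by rw [← Finset.sum_add_distrib]; simp [add_smul]⟩
  | smul a y _ hy =>
    obtain ⟨d, rfl⟩ := hy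
    exact ⟨a • d, by rw [Finset.smul_sum]; simp [smul_smul, mul_assoc]⟩

/-- unitriangular expansion of `s` in the `hprod` basis -/
lemma s_sub_hprod_mem (hs : KSchurFam k c s) :
    ∀ lam, KBounded k lam →
      s lam - hprod lam ∈ Submodule.span ℤ (hprod '' ↑(TK k lam)) := by
  intro lam
  induction lam using gInd with
  | _ lam ih =>
    intro hlam
    have h : s lam - hprod lam = - ∑ mu ∈ TK k lam, (KNum k c mu lam) • s mu := by
      rw [fam_recur hs hlam]; ring
    rw [h]
    apply Submodule.neg_mem
    apply Submodule.sum_mem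
    intro mu hmu
    have hmu' := hmu
    rw [mem_TK] at hmu'
    apply nat_smul_mem
    have hdecomp : s mu = hprod mu + (s mu - hprod mu) := by ring
    rw [hdecomp]
    apply Submodule.add_mem
    · exact Submodule.subset_span ⟨mu, hmu, rfl⟩
    · exact Submodule.span_mono (Set.image_mono (by exact_mod_cast TK_subset hmu))
        (ih mu hmu'.2.1 hmu'.2.2 hmu'.1)

lemma s_expand_hprod (hs : KSchurFam k c s) {lam : Ptn} (hlam : KBounded k lam) :
    ∃ d : Ptn → ℤ, s lam = hprod lam + ∑ mu ∈ TK k lam, d mu • hprod mu := by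
  obtain ⟨d, hd⟩ := span_extract (s_sub_hprod_mem hs lam hlam)
  exact ⟨d, by rw [← hd]; ring⟩

lemma coeff_hprod_delta (nu mu : Ptn) :
    MvPolynomial.coeff (expFn nu) (hprod mu) = if mu = nu then 1 else 0 := by
  rw [hprod_monomial, coeff_monomial]
  by_cases h : mu = nu
  · simp [h]
  · rw [if_neg h, if_neg (fun hc => h (expFn_injective hc))]

lemma s_indep (hs : KSchurFam k c s) :
    LinearIndependent ℤ (fun lam : {lam : Ptn // KBounded k lam} => s (lam : Ptn)) := by
  rw [linearIndependent_iff]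
  intro l hl
  by_contra hne
  have hsupp : l.support.Nonempty := Finsupp.support_nonempty_iff.2 hne
  obtain ⟨nu, hnu, hmax⟩ := Finset.exists_max_image l.support (fun lam => gm (lam : Ptn)) hsupp
  have key : ∀ lam ∈ l.support,
      MvPolynomial.coeff (expFn (nu : Ptn)) (s (lam : Ptn)) =
        if lam = nu then 1 else 0 := by
    intro lam hlam
    obtain ⟨d, hd⟩ := s_expand_hprod hs lam.2
    rw [hd, MvPolynomial.coeff_add, coeff_hprod_delta, MvPolynomial.coeff_sum]
    have hzero : ∀ mu ∈ TK k (lam : Ptn),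
        MvPolynomial.coeff (expFn (nu : Ptn)) (d mu • hprod mu) = 0 := by
      intro mu hmu
      rw [MvPolynomial.coeff_smul, coeff_hprod_delta]
      have hne' : mu ≠ (nu : Ptn) := by
        intro hcon
        subst hcon
        rw [mem_TK] at hmu
        have h1 := gm_lt hmu.2.1 hmu.2.2
        have h2 := hmax lam hlam
        omega
      rw [if_neg hne', smul_zero]
    rw [Finset.sum_eq_zero hzero, add_zero]
    congr 1
    simp only [eq_iff_iff]
    exact ⟨fun h => Subtype.ext h, fun h => congrArg _ h⟩
  have h0 : MvPolynomial.coeff (expFn (nu : Ptn)) ((Finsupp.linearCombination ℤ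
      (fun lam : {lam : Ptn // KBounded k lam} => s (lam : Ptn))) l) = 0 := by
    rw [hl]; simp
  rw [Finsupp.linearCombination_apply, Finsupp.sum, MvPolynomial.coeff_sum] at h0
  have hterm : ∀ lam ∈ l.support,
      MvPolynomial.coeff (expFn (nu : Ptn)) (l lam • s (lam : Ptn)) =
        if lam = nu then l lam else 0 := by
    intro lam hlam
    rw [MvPolynomial.coeff_smul, smul_eq_mul, key lam hlam]
    split_ifs <;> simp
  rw [Finset.sum_congr rfl hterm, Finset.sum_ite_eq' l.support nu (fun lam => l lam),
    if_pos hnu] at h0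
  exact (Finsupp.mem_support_iff.1 hnu) h0

end SpanIndep

section SortHelpers

open Finset

lemma strictMono_fin_le {m : ℕ} (f : Fin m → ℕ) (hf : StrictMono f) :
    ∀ r : Fin m, (r : ℕ) ≤ f r := by
  intro r
  obtain ⟨v, hv⟩ := r
  induction v with
  | zero => exact Nat.zero_le _
  | succ v ih =>
    have hv' : v < m := by omega
    have h1 : f ⟨v, hv'⟩ < f ⟨v+1, hv⟩ := hf (by simp [Fin.lt_def])
    have h2 : v ≤ f ⟨v, hv'⟩ := ih hv'
    show v + 1 ≤ f ⟨v+1, hv⟩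
    omega

lemma sum_top (w : ℕ → ℕ) (hw : ∀ {i j : ℕ}, i ≤ j → w j ≤ w i) (t : Finset ℕ) :
    ∑ i ∈ t, w i ≤ ∑ i ∈ Finset.range t.card, w i := by
  classical
  have e := t.orderIsoOfFin rfl
  have hmono : StrictMono (fun r : Fin t.card => ((e r : ℕ))) :=
    fun a b hab => by exact_mod_cast e.strictMono hab
  calc ∑ i ∈ t, w i = ∑ x ∈ t.attach, w x := (Finset.sum_attach t w).symm
  _ = ∑ r : Fin t.card, w (e r) := by
      rw [← Finset.univ_eq_attach]
      exact (Equiv.sum_comp e.toEquiv (fun x => w (x : ℕ))).symm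
  _ ≤ ∑ r : Fin t.card, w r :=
      Finset.sum_le_sum (fun r _ => hw (strictMono_fin_le _ hmono r))
  _ = ∑ i ∈ Finset.range t.card, w i := Fin.sum_univ_eq_sum_range _ _

lemma sum_bot (t : Finset ℕ) : ∑ j ∈ Finset.range t.card, j ≤ ∑ i ∈ t, i := by
  classical
  have e := t.orderIsoOfFin rfl
  have hmono : StrictMono (fun r : Fin t.card => ((e r : ℕ))) :=
    fun a b hab => by exact_mod_cast e.strictMono hab
  calc ∑ j ∈ Finset.range t.card, j = ∑ r : Fin t.card, (r : ℕ) :=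
      (Fin.sum_univ_eq_sum_range _ _).symm
  _ ≤ ∑ r : Fin t.card, ((e r : ℕ)) := Finset.sum_le_sum (fun r _ => strictMono_fin_le _ hmono r)
  _ = ∑ x ∈ t.attach, (x : ℕ) := by
      rw [← Finset.univ_eq_attach]
      exact Equiv.sum_comp e.toEquiv (fun x => (x : ℕ))
  _ = ∑ i ∈ t, i := Finset.sum_attach t (fun i => i)

lemma psum_stable (nu : Ptn) (m : ℕ) (h : nu.len ≤ m) : psum nu m = psum nu nu.len := by
  rw [psum, psum, ← Finset.sum_range_add_sum_Ico _ h]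
  have : ∀ i ∈ Finset.Ico nu.len m, nu.part i = 0 := by
    intro i hi
    simp only [Finset.mem_Ico] at hi
    have := nu.part_pos_iff i
    omega
  rw [Finset.sum_congr rfl this]
  simp

end SortHelpers

section SchurDet

open Finset

variable {n : ℕ}

lemma perm_filter_sum (σ : Equiv.Perm (Fin n)) (p : Fin n → Prop) [DecidablePred p]
    {M : Type*} [AddCommMonoid M] (f : Fin n → M) :
    ∑ i ∈ Finset.univ.filter (fun i => p (σ i)), f (σ i) =
      ∑ j ∈ Finset.univ.filter p, f j := by
  rw [← Finset.sum_image (s := Finset.univ.filter (fun i => p (σ i))) (g := σ) (f := f)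
    (fun x _ y _ h => σ.injective h)]
  congr 1
  ext j
  simp only [Finset.mem_image, Finset.mem_filter, Finset.mem_univ, true_and]
  constructor
  · rintro ⟨i, hp, rfl⟩; exact hp
  · intro hp; exact ⟨σ.symm j, by simpa using hp, by simp⟩

lemma filterJ_sum (m' : ℕ) (h : m' ≤ n) {M : Type*} [AddCommMonoid M] (f : ℕ → M) :
    ∑ j ∈ Finset.univ.filter (fun j : Fin n => (j : ℕ) < m'), f (j : ℕ) =
      ∑ j ∈ Finset.range m', f j := by
  rw [← Finset.sum_image (s := Finset.univ.filter (fun j : Fin n => (j : ℕ) < m'))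
    (g := fun j : Fin n => (j : ℕ)) (f := f)
    (fun x _ y _ hxy => Fin.val_injective hxy)]
  congr 1
  ext j
  simp only [Finset.mem_image, Finset.mem_filter, Finset.mem_univ, true_and, Finset.mem_range]
  constructor
  · rintro ⟨i, hp, rfl⟩; exact hp
  · intro hp; exact ⟨⟨j, by omega⟩, hp, rfl⟩

lemma filterJ_card (m' : ℕ) (h : m' ≤ n) :
    (Finset.univ.filter (fun j : Fin n => (j : ℕ) < m')).card = m' := by
  have h2 := filterJ_sum (n := n) m' h (fun _ => (1 : ℕ))
  rw [Finset.card_eq_sum_ones, h2, ← Finset.card_eq_sum_ones, Finset.card_range]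

lemma Afin_card (σ : Equiv.Perm (Fin n)) (m' : ℕ) (h : m' ≤ n) :
    (Finset.univ.filter (fun i => ((σ i : Fin n) : ℕ) < m')).card = m' := by
  have h2 := perm_filter_sum σ (fun j => (j : ℕ) < m') (fun _ => (1 : ℕ))
  rw [Finset.card_eq_sum_ones, h2, ← Finset.card_eq_sum_ones, filterJ_card (n := n) m' h]

end SchurDet

section SortPtn

open Finset

lemma psum_stable' (mu : Ptn) (N : ℕ) (h : ∀ i, N ≤ i → mu.part i = 0) (m : ℕ) (hm : N ≤ m) :
    psum mu m = psum mu N := by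
  rw [psum, psum, ← Finset.sum_range_add_sum_Ico _ hm]
  have : ∀ i ∈ Finset.Ico N m, mu.part i = 0 := fun i hi =>
    h i (by simp only [Finset.mem_Ico] at hi; omega)
  rw [Finset.sum_congr rfl this]
  simp

/-- the partition obtained by sorting a tuple of naturals decreasingly -/
noncomputable def sortPtn {n : ℕ} (β : Fin n → ℕ) : Ptn where
  part := fun i => if h : i < n then β ((Tuple.sort β) (Fin.rev ⟨i, h⟩)) else 0
  antitone' := by
    intro i j hij
    by_cases hj : j < n
    · have hi : i < n := by omega
      rw [dif_pos hj, dif_pos hi]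
      exact Tuple.monotone_sort β (by
        show Fin.rev ⟨j, hj⟩ ≤ Fin.rev ⟨i, hi⟩
        rw [Fin.rev_le_rev]
        exact Fin.mk_le_mk.2 hij)
    · rw [dif_neg hj]
      exact Nat.zero_le _
  finite' := ⟨n, fun i hi => dif_neg (by omega)⟩

lemma sortPtn_part_eq {n : ℕ} (β : Fin n → ℕ) (i : Fin n) :
    (sortPtn β).part (i : ℕ) = β ((Fin.revPerm.trans (Tuple.sort β)) i) := by
  show dite _ _ _ = _
  rw [dif_pos i.2]
  simp [Equiv.trans_apply, Fin.eta]

lemma sortPtn_part_zero {n : ℕ} (β : Fin n → ℕ) (j : ℕ) (hj : n ≤ j) :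
    (sortPtn β).part j = 0 := dif_neg (by omega)

lemma sortPtn_hprod {n : ℕ} (β : Fin n → ℕ) :
    hprod (sortPtn β) = ∏ i : Fin n, hh (β i) := by
  rw [hprod_eq_prod (sortPtn β) n (fun i hi => sortPtn_part_zero β i hi),
    ← Fin.prod_univ_eq_prod_range (fun i => hh ((sortPtn β).part i)) n]
  rw [Finset.prod_congr rfl (fun i _ => by rw [sortPtn_part_eq β i])]
  exact Equiv.prod_comp (Fin.revPerm.trans (Tuple.sort β)) (fun j => hh (β j))

lemma sortPtn_psum_n {n : ℕ} (β : Fin n → ℕ) :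
    psum (sortPtn β) n = ∑ i : Fin n, β i := by
  rw [psum, ← Fin.sum_univ_eq_sum_range (fun i => (sortPtn β).part i) n,
    Finset.sum_congr rfl (fun i _ => sortPtn_part_eq β i)]
  exact Equiv.sum_comp (Fin.revPerm.trans (Tuple.sort β)) β

lemma sortPtn_top {n : ℕ} (β : Fin n → ℕ) (t : Finset (Fin n)) :
    ∑ i ∈ t, β i ≤ psum (sortPtn β) t.card := by
  set e := Fin.revPerm.trans (Tuple.sort β) with he
  have h1 : ∀ i : Fin n, β i = (sortPtn β).part ((e.symm i : Fin n) : ℕ) := by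
    intro i
    rw [sortPtn_part_eq β (e.symm i), Equiv.apply_symm_apply]
  rw [Finset.sum_congr rfl (fun i _ => h1 i)]
  have hinj : Function.Injective (fun i : Fin n => ((e.symm i : Fin n) : ℕ)) :=
    fun a b hab => e.symm.injective (Fin.val_injective hab)
  rw [← Finset.sum_image (s := t) (g := fun i : Fin n => ((e.symm i : Fin n) : ℕ))
    (f := fun j => (sortPtn β).part j) (fun x _ y _ h => hinj h)]
  have hcard : (t.image (fun i : Fin n => ((e.symm i : Fin n) : ℕ))).card = t.card :=
    Finset.card_image_of_injective t hinj
  calc _ ≤ ∑ j ∈ Finset.range (t.image (fun i : Fin n => ((e.symm i : Fin n) : ℕ))).card,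
        (sortPtn β).part j :=
      sum_top (sortPtn β).part (fun {a b} hab => (sortPtn β).antitone' hab) _
  _ = psum (sortPtn β) t.card := by rw [hcard, psum]

end SortPtn

section PermTerm

open Finset

lemma perm_term_mem (nu : Ptn) {n : ℕ} (hn : n = nu.len) (σ : Equiv.Perm (Fin n)) (hσ : σ ≠ 1) :
    (∏ i : Fin n, hh ((nu.part (σ i) : ℤ) - ((σ i : ℕ) : ℤ) + ((i : ℕ) : ℤ)))
      ∈ Submodule.span ℤ (hprod '' {mu : Ptn | Dominates mu nu ∧ mu ≠ nu}) := by
  classical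
  set α : Fin n → ℤ :=
    fun i => (nu.part (σ i) : ℤ) - ((σ i : ℕ) : ℤ) + ((i : ℕ) : ℤ) with hαdef
  by_cases hneg : ∃ i, α i < 0
  · obtain ⟨i, hi⟩ := hneg
    have hz : hh (α i) = 0 := by rw [hh, if_pos hi]
    rw [Finset.prod_eq_zero (Finset.mem_univ i) hz]
    exact Submodule.zero_mem _
  push_neg at hneg
  set β : Fin n → ℕ := fun i => (α i).toNat with hβdef
  have hβα : ∀ i, (β i : ℤ) = α i := fun i => Int.toNat_of_nonneg (hneg i)
  set μ := sortPtn β with hμdef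
  set Af : ℕ → Finset (Fin n) :=
    fun m' => Finset.univ.filter (fun i => ((σ i : Fin n) : ℕ) < m') with hAfdef
  have hAfcard : ∀ m', m' ≤ n → (Af m').card = m' := fun m' h => Afin_card σ m' h
  -- the key split identity over ℤ
  have hsplit : ∀ m', m' ≤ n →
      (∑ i ∈ Af m', (β i : ℤ)) =
        (psum nu m' : ℤ) + ((∑ i ∈ Af m', ((i : ℕ) : ℤ)) - ∑ j ∈ Finset.range m', (j : ℤ)) := by
    intro m' hm'
    have h1 : (∑ i ∈ Af m', (β i : ℤ)) = ∑ i ∈ Af m', α i :=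
      Finset.sum_congr rfl (fun i _ => hβα i)
    have h2 : ∑ i ∈ Af m', α i =
        (∑ i ∈ Af m', ((nu.part (σ i) : ℤ) - ((σ i : ℕ) : ℤ))) + ∑ i ∈ Af m', ((i : ℕ) : ℤ) := by
      rw [← Finset.sum_add_distrib]
    have h3 : (∑ i ∈ Af m', ((nu.part (σ i) : ℤ) - ((σ i : ℕ) : ℤ))) =
        ∑ j ∈ Finset.univ.filter (fun j : Fin n => (j : ℕ) < m'),
          ((nu.part j : ℤ) - ((j : ℕ) : ℤ)) :=
      perm_filter_sum σ (fun j => (j : ℕ) < m') (fun j => (nu.part j : ℤ) - ((j : ℕ) : ℤ))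
    have h4 : (∑ j ∈ Finset.univ.filter (fun j : Fin n => (j : ℕ) < m'),
          ((nu.part j : ℤ) - ((j : ℕ) : ℤ))) =
        ∑ j ∈ Finset.range m', ((nu.part j : ℤ) - (j : ℤ)) :=
      filterJ_sum m' hm' (fun j => (nu.part j : ℤ) - (j : ℤ))
    have h5 : (∑ j ∈ Finset.range m', ((nu.part j : ℤ) - (j : ℤ))) =
        (psum nu m' : ℤ) - ∑ j ∈ Finset.range m', (j : ℤ) := by
      rw [Finset.sum_sub_distrib, psum]
      push_cast
      ring
    rw [h1, h2, h3, h4, h5]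
    ring
  -- lower bound on the index sums
  have hidx : ∀ m', m' ≤ n →
      (∑ j ∈ Finset.range m', (j : ℤ)) ≤ ∑ i ∈ Af m', ((i : ℕ) : ℤ) := by
    intro m' hm'
    have hinj : Function.Injective (fun i : Fin n => (i : ℕ)) := Fin.val_injective
    have h1 : ∑ i ∈ Af m', (i : ℕ) = ∑ a ∈ (Af m').image (fun i : Fin n => (i : ℕ)), a := by
      rw [Finset.sum_image (fun x _ y _ h => hinj h)]
    have hcard : ((Af m').image (fun i : Fin n => (i : ℕ))).card = m' := by
      rw [Finset.card_image_of_injective _ hinj, hAfcard m' hm']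
    have h2 := sum_bot ((Af m').image (fun i : Fin n => (i : ℕ)))
    rw [hcard] at h2
    have : ∑ j ∈ Finset.range m', j ≤ ∑ i ∈ Af m', (i : ℕ) := by omega
    calc (∑ j ∈ Finset.range m', (j : ℤ)) = ((∑ j ∈ Finset.range m', j : ℕ) : ℤ) := by
          push_cast; rfl
    _ ≤ ((∑ i ∈ Af m', (i : ℕ) : ℕ) : ℤ) := by exact_mod_cast this
    _ = ∑ i ∈ Af m', ((i : ℕ) : ℤ) := by push_cast; rfl
  -- partial sum dominance for m' ≤ n
  have hpsle : ∀ m', m' ≤ n → psum nu m' ≤ psum μ m' := by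
    intro m' hm'
    have h1 := hsplit m' hm'
    have h2 := hidx m' hm'
    have h3 : (psum nu m' : ℤ) ≤ ∑ i ∈ Af m', (β i : ℤ) := by omega
    have h4 : ∑ i ∈ Af m', β i ≤ psum μ m' := by
      have := sortPtn_top β (Af m')
      rw [hAfcard m' hm'] at this
      exact this
    have h5 : (∑ i ∈ Af m', (β i : ℤ)) = ((∑ i ∈ Af m', β i : ℕ) : ℤ) := by push_cast; rfl
    omega
  -- total sums agree
  have hAfn : Af n = Finset.univ := by
    ext i
    simp [hAfdef, (σ i).isLt]
  have hfull : psum μ n = psum nu n := by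
    have h1 := hsplit n le_rfl
    rw [hAfn] at h1
    have h2 : (∑ i : Fin n, ((i : ℕ) : ℤ)) = ∑ j ∈ Finset.range n, (j : ℤ) :=
      Fin.sum_univ_eq_sum_range (fun j => (j : ℤ)) n
    rw [h2] at h1
    have h3 : (∑ i : Fin n, (β i : ℤ)) = (psum nu n : ℤ) := by omega
    have h4 : psum μ n = ∑ i : Fin n, β i := sortPtn_psum_n β
    have h5 : (∑ i : Fin n, (β i : ℤ)) = ((∑ i : Fin n, β i : ℕ) : ℤ) := by push_cast; rfl
    omega
  have hnulen : ∀ i, n ≤ i → nu.part i = 0 := by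
    intro i hi
    have := nu.part_pos_iff i
    omega
  have hsize : μ.size = nu.size := by
    rw [μ.size_eq_psum n (fun i hi => sortPtn_part_zero β i hi),
      nu.size_eq_psum n hnulen, hfull]
  have hdom : Dominates μ nu := by
    refine ⟨hsize, fun m' => ?_⟩
    rcases le_or_gt m' n with h|h
    · exact hpsle m' h
    · have h1 : psum nu m' = psum nu n := psum_stable' nu n hnulen m' (by omega)
      have h2 : psum μ m' = psum μ n :=
        psum_stable' μ n (fun i hi => sortPtn_part_zero β i hi) m' (by omega)
      show psum nu m' ≤ psum μ m'
      rw [h1, h2, hfull]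
  -- strictness
  have hTne : (Finset.univ.filter (fun i : Fin n => σ i ≠ i)).Nonempty := by
    by_contra hc
    rw [Finset.not_nonempty_iff_eq_empty, Finset.filter_eq_empty_iff] at hc
    apply hσ
    apply Equiv.ext
    intro i
    have h' := hc (Finset.mem_univ i)
    simp only [ne_eq, not_not] at h'
    simpa using h'
  set i₀ := (Finset.univ.filter (fun i : Fin n => σ i ≠ i)).min' hTne with hi₀def
  have hi₀ : σ i₀ ≠ i₀ := by
    have := Finset.min'_mem _ hTne
    rw [Finset.mem_filter] at this
    exact this.2
  have hi₀min : ∀ i : Fin n, (i : ℕ) < (i₀ : ℕ) → σ i = i := by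
    intro i hlt
    by_contra hc
    have hmem : i ∈ Finset.univ.filter (fun i : Fin n => σ i ≠ i) := by
      rw [Finset.mem_filter]
      exact ⟨Finset.mem_univ i, hc⟩
    have := Finset.min'_le _ i hmem
    rw [Fin.le_def] at this
    omega
  have hσi₁ : σ (σ.symm i₀) = i₀ := σ.apply_symm_apply i₀
  have hσi₁v : ((σ (σ.symm i₀) : Fin n) : ℕ) = (i₀ : ℕ) := congrArg Fin.val hσi₁
  have hi₁gt : (i₀ : ℕ) < ((σ.symm i₀ : Fin n) : ℕ) := by
    rcases lt_trichotomy (((σ.symm i₀ : Fin n)) : ℕ) ((i₀ : ℕ)) with h|h|h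
    · have hfix := hi₀min (σ.symm i₀) h
      rw [hfix] at hσi₁
      rw [hσi₁] at h
      omega
    · exfalso
      apply hi₀
      have hh' : σ.symm i₀ = i₀ := Fin.val_injective h
      rw [← hh', hσi₁, hh']
    · exact h
  have hm'0le : (i₀ : ℕ) + 1 ≤ n := i₀.isLt
  have hS0 : insert (((σ.symm i₀ : Fin n)) : ℕ) (Finset.range (i₀ : ℕ)) ⊆
      (Af ((i₀ : ℕ) + 1)).image (fun i : Fin n => (i : ℕ)) := by
    intro a ha
    rw [Finset.mem_insert] at ha
    rcases ha with rfl|ha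
    · apply Finset.mem_image_of_mem
      rw [hAfdef]
      simp only [Finset.mem_filter, Finset.mem_univ, true_and]
      rw [hσi₁v]
      omega
    · rw [Finset.mem_range] at ha
      have han : a < n := by omega
      have hfix : σ ⟨a, han⟩ = ⟨a, han⟩ := hi₀min ⟨a, han⟩ ha
      rw [Finset.mem_image]
      refine ⟨⟨a, han⟩, ?_, rfl⟩
      rw [hAfdef]
      simp only [Finset.mem_filter, Finset.mem_univ, true_and]
      rw [hfix]
      show a < (i₀ : ℕ) + 1
      omega
  have hstrictidx : (∑ j ∈ Finset.range ((i₀ : ℕ) + 1), j) + 1 ≤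
      ∑ i ∈ Af ((i₀ : ℕ) + 1), (i : ℕ) := by
    have h1 : ∑ i ∈ Af ((i₀ : ℕ) + 1), (i : ℕ) =
        ∑ a ∈ (Af ((i₀ : ℕ) + 1)).image (fun i : Fin n => (i : ℕ)), a := by
      rw [Finset.sum_image (fun x _ y _ h => Fin.val_injective h)]
    have h2 : (∑ a ∈ insert (((σ.symm i₀ : Fin n)) : ℕ) (Finset.range (i₀ : ℕ)), a) ≤
        ∑ a ∈ (Af ((i₀ : ℕ) + 1)).image (fun i : Fin n => (i : ℕ)), a :=
      Finset.sum_le_sum_of_subset hS0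
    rw [Finset.sum_insert (by rw [Finset.mem_range]; omega)] at h2
    rw [Finset.sum_range_succ]
    omega
  have hstrict : psum nu ((i₀ : ℕ) + 1) < psum μ ((i₀ : ℕ) + 1) := by
    have h1 := hsplit ((i₀ : ℕ) + 1) hm'0le
    have h4 : ∑ i ∈ Af ((i₀ : ℕ) + 1), β i ≤ psum μ ((i₀ : ℕ) + 1) := by
      have := sortPtn_top β (Af ((i₀ : ℕ) + 1))
      rw [hAfcard ((i₀ : ℕ) + 1) hm'0le] at this
      exact this
    have h5 : (∑ i ∈ Af ((i₀ : ℕ) + 1), (β i : ℤ)) =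
        ((∑ i ∈ Af ((i₀ : ℕ) + 1), β i : ℕ) : ℤ) := by push_cast; rfl
    have h6 : (∑ i ∈ Af ((i₀ : ℕ) + 1), ((i : ℕ) : ℤ)) =
        ((∑ i ∈ Af ((i₀ : ℕ) + 1), (i : ℕ) : ℕ) : ℤ) := by push_cast; rfl
    have h7 : (∑ j ∈ Finset.range ((i₀ : ℕ) + 1), (j : ℤ)) =
        ((∑ j ∈ Finset.range ((i₀ : ℕ) + 1), j : ℕ) : ℤ) := by push_cast; rfl
    omega
  have hnene : μ ≠ nu := by
    intro hcon
    rw [hcon] at hstrict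
    omega
  have hgoal : (∏ i : Fin n, hh (α i)) = hprod μ := by
    rw [sortPtn_hprod β]
    exact Finset.prod_congr rfl (fun i _ => by rw [← hβα i])
  show (∏ i : Fin n, hh (α i)) ∈ _
  rw [hgoal]
  exact Submodule.subset_span ⟨μ, ⟨hdom, hnene⟩, rfl⟩

end PermTerm

section SchurExpand

open Finset

lemma Dset_finite (nu : Ptn) : {mu : Ptn | Dominates mu nu ∧ mu ≠ nu}.Finite :=
  (domFinite nu).subset (fun _ hmu => hmu.1)

noncomputable def Dfin (nu : Ptn) : Finset Ptn := (Dset_finite nu).toFinset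

lemma mem_Dfin {nu mu : Ptn} : mu ∈ Dfin nu ↔ Dominates mu nu ∧ mu ≠ nu :=
  Set.Finite.mem_toFinset _

lemma Dfin_sub {mu nu : Ptn} (h : mu ∈ Dfin nu) : Dfin mu ⊆ Dfin nu := by
  intro x hx
  rw [mem_Dfin] at h hx ⊢
  refine ⟨hx.1.trans h.1, ?_⟩
  rintro rfl
  exact h.2 (h.1.antisymm hx.1)

lemma coe_Dfin (nu : Ptn) : ↑(Dfin nu) = {mu : Ptn | Dominates mu nu ∧ mu ≠ nu} :=
  Set.Finite.coe_toFinset _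

lemma schur_sub_hprod_mem (nu : Ptn) :
    schur nu - hprod nu ∈ Submodule.span ℤ (hprod '' ↑(Dfin nu)) := by
  classical
  rw [coe_Dfin, schur, Matrix.det_apply]
  rw [← Finset.add_sum_erase _ _ (Finset.mem_univ (1 : Equiv.Perm (Fin nu.len)))]
  have hident : (Equiv.Perm.sign (1 : Equiv.Perm (Fin nu.len))) •
      (∏ i : Fin nu.len, (Matrix.of fun i j : Fin nu.len =>
        hh ((nu.part i : ℤ) - (i : ℤ) + (j : ℤ))) ((1 : Equiv.Perm (Fin nu.len)) i) i) =
      hprod nu := by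
    rw [Equiv.Perm.sign_one, one_smul]
    rw [hprod_eq_prod_len, ← Fin.prod_univ_eq_prod_range (fun i => hh (nu.part i)) nu.len]
    apply Finset.prod_congr rfl
    intro i _
    simp only [Equiv.Perm.one_apply, Matrix.of_apply]
    congr 1
    ring
  rw [hident]
  have hrest : ∀ σ ∈ Finset.univ.erase (1 : Equiv.Perm (Fin nu.len)),
      (Equiv.Perm.sign σ) • (∏ i : Fin nu.len, (Matrix.of fun i j : Fin nu.len =>
        hh ((nu.part i : ℤ) - (i : ℤ) + (j : ℤ))) (σ i) i) ∈
        Submodule.span ℤ (hprod '' {mu : Ptn | Dominates mu nu ∧ mu ≠ nu}) := by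
    intro σ hσ
    rw [Finset.mem_erase] at hσ
    have hterm : (∏ i : Fin nu.len, (Matrix.of fun i j : Fin nu.len =>
        hh ((nu.part i : ℤ) - (i : ℤ) + (j : ℤ))) (σ i) i) =
        ∏ i : Fin nu.len, hh ((nu.part (σ i) : ℤ) - ((σ i : ℕ) : ℤ) + ((i : ℕ) : ℤ)) := rfl
    rw [hterm, Units.smul_def]
    exact Submodule.smul_mem _ _ (perm_term_mem nu rfl σ hσ.1)
  have : hprod nu + (∑ σ ∈ Finset.univ.erase (1 : Equiv.Perm (Fin nu.len)),
      (Equiv.Perm.sign σ) • (∏ i : Fin nu.len, (Matrix.of fun i j : Fin nu.len =>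
        hh ((nu.part i : ℤ) - (i : ℤ) + (j : ℤ))) (σ i) i)) - hprod nu =
      ∑ σ ∈ Finset.univ.erase (1 : Equiv.Perm (Fin nu.len)),
      (Equiv.Perm.sign σ) • (∏ i : Fin nu.len, (Matrix.of fun i j : Fin nu.len =>
        hh ((nu.part i : ℤ) - (i : ℤ) + (j : ℤ))) (σ i) i) := by ring
  rw [this]
  exact Submodule.sum_mem _ hrest

lemma hprod_sub_schur_mem : ∀ nu : Ptn,
    hprod nu - schur nu ∈ Submodule.span ℤ (schur '' ↑(Dfin nu)) := by
  apply gInd (fun nu => hprod nu - schur nu ∈ Submodule.span ℤ (schur '' ↑(Dfin nu)))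
  intro nu ih
  have h1 := schur_sub_hprod_mem nu
  have hle : Submodule.span ℤ (hprod '' ↑(Dfin nu)) ≤
      Submodule.span ℤ (schur '' ↑(Dfin nu)) := by
    rw [Submodule.span_le]
    rintro x ⟨mu, hmu, rfl⟩
    have hmu' : mu ∈ Dfin nu := hmu
    rw [mem_Dfin] at hmu'
    have hdecomp : hprod mu = schur mu + (hprod mu - schur mu) := by ring
    rw [SetLike.mem_coe, hdecomp]
    apply Submodule.add_mem
    · exact Submodule.subset_span ⟨mu, hmu, rfl⟩
    · exact Submodule.span_mono (Set.image_mono (by exact_mod_cast Dfin_sub hmu))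
        (ih mu hmu'.1 hmu'.2)
  have : hprod nu - schur nu = -(schur nu - hprod nu) := by ring
  rw [this]
  exact Submodule.neg_mem _ (hle h1)

lemma s_sub_schur_mem {k : ℕ} {c : Ptn → Ptn} {s : Ptn → SF} (hs : KSchurFam k c s) :
    ∀ lam, KBounded k lam →
      s lam - schur lam ∈ Submodule.span ℤ (schur '' ↑(Dfin lam)) := by
  intro lam
  induction lam using gInd with
  | _ lam ih =>
    intro hlam
    have heq : s lam - schur lam =
        (hprod lam - schur lam) - ∑ mu ∈ TK k lam, (KNum k c mu lam) • s mu := by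
      rw [fam_recur hs hlam]; ring
    rw [heq]
    apply Submodule.sub_mem
    · exact hprod_sub_schur_mem lam
    · apply Submodule.sum_mem
      intro mu hmu
      have hmu' := hmu
      rw [mem_TK] at hmu'
      have hmuD : mu ∈ Dfin lam := mem_Dfin.2 ⟨hmu'.2.1, hmu'.2.2⟩
      apply nat_smul_mem
      have hdecomp : s mu = schur mu + (s mu - schur mu) := by ring
      rw [hdecomp]
      apply Submodule.add_mem
      · exact Submodule.subset_span ⟨mu, hmuD, rfl⟩
      · exact Submodule.span_mono (Set.image_mono (by exact_mod_cast Dfin_sub hmuD))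
          (ih mu hmu'.2.1 hmu'.2.2 hmu'.1)

end SchurExpand

/-- the `k`-Schur functions, defined by inverting the unitriangular
system `h_λ = s_λ^{(k)} + Σ_{μ ⊳ λ} K^{(k)}_{μλ} s_μ^{(k)}`, exist and are unique,
form a basis of `Λ^{(k)} = ℤ[h₁,…,h_k]`, and each expands as `s_λ` plus an integer
combination of Schur functions `s_μ` with `μ` strictly dominating `λ`. -/
theorem stmt14 (k : ℕ) (hk : 0 < k) (c cinv : Ptn → Ptn) (hc : CorePair k c cinv) :
    (∃! s : Ptn → SF, (∀ lam, ¬ KBounded k lam → s lam = 0) ∧ KSchurFam k c s) ∧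
    (∀ s : Ptn → SF, KSchurFam k c s →
      (LinearIndependent ℤ (fun lam : {lam : Ptn // KBounded k lam} => s (lam : Ptn))) ∧
      (Submodule.span ℤ (Set.range fun lam : {lam : Ptn // KBounded k lam} => s (lam : Ptn)) =
        Subalgebra.toSubmodule (Lk k)) ∧
      (∀ lam, KBounded k lam → ∃ d : Ptn → ℤ,
        s lam = schur lam +
          ∑ᶠ mu ∈ {mu : Ptn | Dominates mu lam ∧ mu ≠ lam}, d mu • schur mu)) := by
  
  constructor
  · refine ⟨ksch k c, ⟨fun lam h => ksch_zero h, ksch_fam k c⟩, ?_⟩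
    intro s' hs'
    exact fam_unique hs' ⟨fun lam h => ksch_zero h, ksch_fam k c⟩
  · intro s hs
    refine ⟨s_indep hs, ?_, ?_⟩
    · rw [span_s_eq_span_hprod hs, range_hprodKB, span_Mset_eq_Lk]
    · intro lam hlam
      obtain ⟨d, hd⟩ := span_extract (s_sub_schur_mem hs lam hlam)
      refine ⟨d, ?_⟩
      rw [← coe_Dfin, finsum_mem_coe_finset, ← hd]
      ring
end
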